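/- arXiv:1807.02238 — 4 statements merged into one kernel-verified Lean document; each statement's English description precedes it below -/
import Mathlib

section
/- Let Q : Ω₁ × ⋯ × Ω_d → ℂ be a function holomorphic in each coordinate separately, where Ω₁,…,Ω_d ⊆ ℂ are open connected sets, and assume all its partial derivatives coincide: D₁Q = D₂Q = ⋯ = D_dQ on the product domain. Then Q(x₁,…,x_d) = Q(x₁',…,x_d') whenever x₁+⋯+x_d = x₁'+⋯+x_d' (and both tuples lie in the domain with equal sums attainable by a connected path argument). In particular, Q factors through the sum of its coordinates. -/
open Metric Set

private lemma convex_comb_eq (p q : ℂ) (s : ℝ) : p + s • (q - p) = (1 - s) • p + s • q := by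
  simp only [Complex.real_smul, Complex.ofReal_sub, Complex.ofReal_one]
  ring

private lemma convex_seg_mem {B : Set ℂ} (hB : Convex ℝ B) {p q : ℂ} (hp : p ∈ B) (hq : q ∈ B)
    {s : ℝ} (h0 : 0 ≤ s) (h1 : s ≤ 1) : p + s • (q - p) ∈ B := by
  rw [convex_comb_eq]
  exact hB hp hq (by linarith) h0 (by ring)

private lemma mvt01 {f : ℝ → ℂ} {f' : ℝ → ℂ} {C : ℝ}
    (hf : ∀ s ∈ Set.Icc (0:ℝ) 1, HasDerivAt f (f' s) s)
    (hb : ∀ s ∈ Set.Icc (0:ℝ) 1, ‖f' s‖ ≤ C) : ‖f 1 - f 0‖ ≤ C := by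
  have := norm_image_sub_le_of_norm_deriv_le_segment'
    (fun s hs => (hf s hs).hasDerivWithinAt)
    (fun s hs => hb s (Set.Ico_subset_Icc_self hs)) 1 (by norm_num : (1:ℝ) ∈ Set.Icc (0:ℝ) 1)
  simpa using this

private lemma hasDerivAt_affine {g : ℂ → ℂ} {p h : ℂ} {s : ℝ}
    (hg : DifferentiableAt ℂ g (p + s • h)) :
    HasDerivAt (fun u : ℝ => g (p + u • h)) (h * deriv g (p + s • h)) s := by
  have h1 : HasDerivAt (fun u : ℝ => p + u • h) h s := by
    simpa using ((hasDerivAt_id s).smul_const h).const_add p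
  have h2 := hg.hasDerivAt
  have := h2.scomp s h1
  simp only [Function.comp_def, Complex.real_smul, smul_eq_mul, mul_comm] at this ⊢
  exact this

private lemma deriv_bound {f : ℂ → ℂ} {c : ℂ} {R M : ℝ} (hR : 0 < R)
    (hd : DifferentiableOn ℂ f (ball c R)) (hM : ∀ z ∈ ball c R, ‖f z‖ ≤ M)
    {z : ℂ} (hz : z ∈ ball c (R/2)) : ‖deriv f z‖ ≤ (2*M+1)/(R/2) := by
  have hzc : dist z c < R/2 := mem_ball.1 hz
  have hzR : z ∈ ball c R := by
    rw [mem_ball]; linarith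
  have hM0 : 0 ≤ M := le_trans (norm_nonneg _) (hM z hzR)
  set r := R - dist z c with hr_def
  have hr : 0 < r := by
    have := dist_nonneg (x := z) (y := c); simp only [hr_def]; linarith
  have hsub : ball z r ⊆ ball c R := by
    apply ball_subset_ball'
    simp [hr_def]
  have hd' : DifferentiableOn ℂ f (ball z r) := hd.mono hsub
  have hmaps : MapsTo f (ball z r) (ball (f z) (2*M+1)) := by
    intro y hy
    have hyc := hsub hy
    rw [mem_ball, dist_eq_norm]
    calc ‖f y - f z‖ ≤ ‖f y‖ + ‖f z‖ := norm_sub_le _ _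
      _ ≤ M + M := add_le_add (hM y hyc) (hM z hzR)
      _ < 2*M+1 := by linarith
  have h1 := Complex.norm_deriv_le_div_of_mapsTo_ball hd' (hmaps.mono_right ball_subset_closedBall) hr
  refine h1.trans ?_
  apply div_le_div_of_nonneg_left (by linarith) (by linarith)
  simp only [hr_def]; linarith

private lemma lip_of_bounded {f : ℂ → ℂ} {c : ℂ} {R M : ℝ} (hR : 0 < R)
    (hd : DifferentiableOn ℂ f (ball c R)) (hM : ∀ z ∈ ball c R, ‖f z‖ ≤ M)
    {z w : ℂ} (hz : z ∈ ball c (R/2)) (hw : w ∈ ball c (R/2)) :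
    ‖f z - f w‖ ≤ ((2*M+1)/(R/2)) * ‖z - w‖ := by
  set L := (2*M+1)/(R/2) with hL
  have hmem : ∀ s ∈ Set.Icc (0:ℝ) 1, w + s • (z - w) ∈ ball c (R/2) := fun s hs =>
    convex_seg_mem (convex_ball c (R/2)) hw hz hs.1 hs.2
  have hdiff : ∀ s ∈ Set.Icc (0:ℝ) 1, DifferentiableAt ℂ f (w + s • (z - w)) := fun s hs =>
    hd.differentiableAt (isOpen_ball.mem_nhds (ball_subset_ball (by linarith) (hmem s hs)))
  have hf : ∀ s ∈ Set.Icc (0:ℝ) 1,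
      HasDerivAt (fun u : ℝ => f (w + u • (z - w))) ((z - w) * deriv f (w + s • (z - w))) s :=
    fun s hs => hasDerivAt_affine (hdiff s hs)
  have hb : ∀ s ∈ Set.Icc (0:ℝ) 1, ‖(z - w) * deriv f (w + s • (z - w))‖ ≤ ‖z - w‖ * L := by
    intro s hs
    rw [norm_mul]
    exact mul_le_mul_of_nonneg_left (deriv_bound hR hd hM (hmem s hs)) (norm_nonneg _)
  have := mvt01 hf hb
  simpa [one_smul, mul_comm] using this

private lemma convex_shift {V : Set ℂ} (hV : Convex ℝ V) (t : ℂ) :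
    Convex ℝ {w : ℂ | w + t ∈ V} := by
  intro p hp q hq a b ha hb hab
  simp only [mem_setOf_eq] at *
  have h2 := hV hp hq ha hb hab
  have h : a • (p + t) + b • (q + t) = a • p + b • q + (a + b) • t := by module
  have h' : a • p + b • q + t = a • (p + t) + b • (q + t) := by rw [h, hab, one_smul]
  rw [h']; exact h2

private lemma eq_zero_on_convex {S : Set ℂ} (hSo : IsOpen S) (hSc : Convex ℝ S) {g : ℂ → ℂ}
    (hg : DifferentiableOn ℂ g S) {z₀ : ℂ} (hz₀ : z₀ ∈ S) {ρ : ℝ} (hρ : 0 < ρ)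
    (hzero : ∀ z ∈ ball z₀ ρ ∩ S, g z = 0) {z : ℂ} (hz : z ∈ S) : g z = 0 := by
  have h1 : AnalyticOnNhd ℂ g S := hg.analyticOnNhd hSo
  have h2 : g =ᶠ[nhds z₀] 0 := by
    have hmem : ball z₀ ρ ∩ S ∈ nhds z₀ := (isOpen_ball.inter hSo).mem_nhds ⟨mem_ball_self hρ, hz₀⟩
    filter_upwards [hmem] with w hw
    exact hzero w hw
  exact h1.eqOn_zero_of_preconnected_of_eventuallyEq_zero hSc.isPreconnected hz₀ h2 hz

private lemma isCompact_seg (p q : ℂ) : IsCompact (segment ℝ p q) := by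
  rw [segment_eq_image ℝ p q]
  exact isCompact_Icc.image
    (((continuous_const.sub continuous_id).smul continuous_const).add
      (continuous_id.smul continuous_const))
private lemma lemma2D {U V : Set ℂ} (hUo : IsOpen U) (hVo : IsOpen V)
    (hUc : Convex ℝ U) (hVc : Convex ℝ V) (F : ℂ → ℂ → ℂ)
    (hFa : ∀ a ∈ U, ∀ b ∈ V, DifferentiableAt ℂ (fun z => F z b) a)
    (hFb : ∀ a ∈ U, ∀ b ∈ V, DifferentiableAt ℂ (fun z => F a z) b)
    (hEq : ∀ a ∈ U, ∀ b ∈ V, deriv (fun z => F z b) a = deriv (fun z => F a z) b)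
    {a a' b b' : ℂ} (ha : a ∈ U) (ha' : a' ∈ U) (hb : b ∈ V) (hb' : b' ∈ V)
    (hs : a + b = a' + b') : F a b = F a' b' := by
  set G : ℂ → ℂ → ℂ := fun p q => deriv (fun z => F z q) p with hGdef
  set G2 : ℂ → ℂ → ℂ := fun p q => deriv (fun z => F p z) q with hG2def
  have hGdefp : ∀ p q, G p q = deriv (fun z => F z q) p := fun _ _ => by rw [hGdef]
  have hG2defp : ∀ p q, G2 p q = deriv (fun z => F p z) q := fun _ _ => by rw [hG2def]
  have hGG2 : ∀ p ∈ U, ∀ q ∈ V, G p q = G2 p q := fun p hp q hq => hEq p hp q hq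
  have hGdOn : ∀ q ∈ V, DifferentiableOn ℂ (fun p => G p q) U := by
    intro q hq
    have hdF : DifferentiableOn ℂ (fun z => F z q) U :=
      fun p hp => (hFa p hp q hq).differentiableWithinAt
    exact ((hdF.analyticOnNhd hUo).deriv).differentiableOn
  have hG2dOn : ∀ p ∈ U, DifferentiableOn ℂ (G2 p) V := by
    intro p hp
    have hdF : DifferentiableOn ℂ (fun z => F p z) V :=
      fun q hq => (hFb p hp q hq).differentiableWithinAt
    exact ((hdF.analyticOnNhd hVo).deriv).differentiableOn
  obtain ⟨α, β, R, M, hR, hM0, hαU, hβV, hbound⟩ :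
      ∃ α β R M, 0 < R ∧ 0 ≤ M ∧ ball α R ⊆ U ∧ ball β R ⊆ V ∧
        ∀ z ∈ ball α R, ∀ w ∈ ball β R, ‖G z w‖ ≤ M := by
    obtain ⟨r₁, hr₁, hball₁⟩ : ∃ r > 0, closedBall a r ⊆ U := by
      obtain ⟨ε, hε, hB⟩ := Metric.isOpen_iff.1 hUo a ha
      exact ⟨ε/2, by linarith, (closedBall_subset_ball (by linarith)).trans hB⟩
    obtain ⟨r₂, hr₂, hball₂⟩ : ∃ r > 0, closedBall b r ⊆ V := by
      obtain ⟨ε, hε, hB⟩ := Metric.isOpen_iff.1 hVo b hb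
      exact ⟨ε/2, by linarith, (closedBall_subset_ball (by linarith)).trans hB⟩
    set K := closedBall a r₁ with hKdef
    have hKU : K ⊆ U := hball₁
    set S : ℕ → Set ℂ :=
      fun n => {w | w ∈ closedBall b r₂ ∧ ∀ z ∈ K, ‖G z w‖ ≤ n} ∪ (ball b r₂)ᶜ with hSdef
    have hSclosed : ∀ n, IsClosed (S n) := by
      intro n
      apply IsClosed.union _ (isClosed_compl_iff.2 isOpen_ball)
      have hrew : {w | w ∈ closedBall b r₂ ∧ ∀ z ∈ K, ‖G z w‖ ≤ n}
          = ⋂ z ∈ K, (closedBall b r₂ ∩ (fun w => ‖G z w‖) ⁻¹' Iic (n:ℝ)) := by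
        ext w
        simp only [mem_setOf_eq, mem_iInter, mem_inter_iff, mem_preimage, mem_Iic]
        constructor
        · rintro ⟨h1, h2⟩ z hz; exact ⟨h1, h2 z hz⟩
        · intro h
          have ha' : a ∈ K := mem_closedBall_self hr₁.le
          exact ⟨(h a ha').1, fun z hz => (h z hz).2⟩
      rw [hrew]
      apply isClosed_biInter
      intro z hz
      have hcont : ContinuousOn (fun w => ‖G z w‖) (closedBall b r₂) := by
        have h1 : ContinuousOn (G2 z) (closedBall b r₂) :=
          ((hG2dOn z (hKU hz)).continuousOn).mono hball₂
        exact (h1.congr (fun w hw => hGG2 z (hKU hz) w (hball₂ hw))).norm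
      exact hcont.preimage_isClosed_of_isClosed isClosed_closedBall isClosed_Iic
    have hcover : ⋃ n, S n = univ := by
      apply eq_univ_of_forall
      intro w
      by_cases hw : w ∈ ball b r₂
      · have hwV : w ∈ V := hball₂ (ball_subset_closedBall hw)
        have hcont : ContinuousOn (fun z => ‖G z w‖) K :=
          (((hGdOn w hwV).mono hKU).continuousOn).norm
        obtain ⟨C, hC⟩ := (isCompact_closedBall a r₁).exists_bound_of_continuousOn hcont
        refine mem_iUnion.2 ⟨⌈C⌉₊, Or.inl ⟨ball_subset_closedBall hw, fun z hz => ?_⟩⟩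
        calc ‖G z w‖ = ‖(‖G z w‖)‖ := by simp
          _ ≤ C := hC z hz
          _ ≤ ⌈C⌉₊ := Nat.le_ceil C
      · exact mem_iUnion.2 ⟨0, Or.inr hw⟩
    have hdense := dense_iUnion_interior_of_closed hSclosed hcover
    obtain ⟨w₀, hw₀, hw₀ball⟩ := hdense.exists_mem_open isOpen_ball
      (nonempty_ball.2 hr₂)
    obtain ⟨n, hn⟩ := mem_iUnion.1 hw₀
    obtain ⟨ρ, hρ, hρball⟩ := Metric.mem_nhds_iff.1 (mem_interior_iff_mem_nhds.1 hn)
    set ρ' := min ρ (r₂ - dist w₀ b) with hρ'def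
    have hρ'pos : 0 < ρ' := by
      apply lt_min hρ
      have := mem_ball.1 hw₀ball
      linarith
    have hsub2 : ball w₀ ρ' ⊆ ball b r₂ := by
      intro w hw
      rw [mem_ball] at hw ⊢
      calc dist w b ≤ dist w w₀ + dist w₀ b := dist_triangle _ _ _
        _ < ρ' + dist w₀ b := by linarith
        _ ≤ r₂ := by simp only [hρ'def]; have := min_le_right ρ (r₂ - dist w₀ b); linarith
    have hgood : ∀ w ∈ ball w₀ ρ', ∀ z ∈ K, ‖G z w‖ ≤ n := by
      intro w hw z hz
      have hwS : w ∈ S n := hρball (ball_subset_ball (min_le_left _ _) hw)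
      rcases hwS with h | h
      · exact h.2 z hz
      · exact absurd (hsub2 hw) h
    refine ⟨a, w₀, min ρ' r₁, n, lt_min hρ'pos hr₁, Nat.cast_nonneg n, ?_, ?_, ?_⟩
    · exact (ball_subset_ball (min_le_right _ _)).trans
        ((ball_subset_closedBall).trans hball₁)
    · exact ((ball_subset_ball (min_le_left _ _)).trans hsub2).trans
        ((ball_subset_closedBall).trans hball₂)
    · intro z hz w hw
      exact hgood w (ball_subset_ball (min_le_left _ _) hw)
        z (ball_subset_closedBall (ball_subset_ball (min_le_right _ _) hz))
  set L := (2*M+1)/(R/2) with hLdef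
  have hL0 : 0 ≤ L := by positivity
  have hLip1 : ∀ w ∈ ball β R, ∀ z ∈ ball α (R/2), ∀ z' ∈ ball α (R/2),
      ‖G z w - G z' w‖ ≤ L * ‖z - z'‖ := by
    intro w hw z hz z' hz'
    exact lip_of_bounded hR ((hGdOn w (hβV hw)).mono hαU)
      (fun p hp => hbound p hp w hw) hz hz'
  have hLip2 : ∀ z ∈ ball α R, ∀ w ∈ ball β (R/2), ∀ w' ∈ ball β (R/2),
      ‖G z w - G z w'‖ ≤ L * ‖w - w'‖ := by
    intro z hz w hw w' hw'
    have h1 : ∀ q ∈ ball β R, ‖G2 z q‖ ≤ M := by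
      intro q hq
      rw [← hGG2 z (hαU hz) q (hβV hq)]
      exact hbound z hz q hq
    have := lip_of_bounded hR ((hG2dOn z (hαU hz)).mono hβV) h1 hw hw'
    rwa [hGG2 z (hαU hz) w (hβV (ball_subset_ball (by linarith) hw)),
      hGG2 z (hαU hz) w' (hβV (ball_subset_ball (by linarith) hw'))]
  have hStep : ∀ p ∈ ball α (R/8), ∀ q ∈ ball β (R/8), ∀ h : ℂ, ‖h‖ ≤ R/8 →
      ‖F (p + h) (q - h) - F p q‖ ≤ (2*L) * ‖h‖^2 := by
    intro p hp q hq h hh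
    have hpα : ‖p - α‖ < R/8 := by rw [← dist_eq_norm]; exact mem_ball.1 hp
    have hqβ : ‖q - β‖ < R/8 := by rw [← dist_eq_norm]; exact mem_ball.1 hq
    have hnorm_smul : ∀ s ∈ Icc (0:ℝ) 1, ‖s • h‖ ≤ ‖h‖ := by
      intro s hs
      rw [norm_smul, Real.norm_eq_abs, abs_of_nonneg hs.1]
      nlinarith [norm_nonneg h, hs.2]
    have hball1 : ∀ s ∈ Icc (0:ℝ) 1, p + s • h ∈ ball α (R/2) := by
      intro s hs
      rw [mem_ball, dist_eq_norm, show p + s • h - α = (p - α) + s • h from by abel]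
      calc ‖(p - α) + s • h‖ ≤ ‖p - α‖ + ‖s • h‖ := norm_add_le _ _
        _ ≤ ‖p - α‖ + ‖h‖ := by linarith [hnorm_smul s hs]
        _ < R/2 := by linarith
    have hqh : q - h ∈ ball β (R/2) := by
      rw [mem_ball, dist_eq_norm, show q - h - β = (q - β) + (-h) from by abel]
      calc ‖(q - β) + (-h)‖ ≤ ‖q - β‖ + ‖h‖ := by
            simpa using norm_add_le (q - β) (-h)
        _ < R/2 := by linarith
    have hball2 : ∀ s ∈ Icc (0:ℝ) 1, (q - h) + s • h ∈ ball β (R/2) := by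
      intro s hs
      rw [mem_ball, dist_eq_norm, show q - h + s • h - β = (q - β) + (-h) + s • h from by abel]
      calc ‖(q - β) + (-h) + s • h‖ ≤ ‖q - β‖ + ‖h‖ + ‖s • h‖ := by
            refine (norm_add_le _ _).trans ?_
            gcongr
            simpa using norm_add_le (q - β) (-h)
        _ ≤ ‖q - β‖ + ‖h‖ + ‖h‖ := by linarith [hnorm_smul s hs]
        _ < R/2 := by linarith
    have hsub : ball α (R/2) ⊆ ball α R := ball_subset_ball (by linarith)
    have hsub' : ball β (R/2) ⊆ ball β R := ball_subset_ball (by linarith)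
    have hder : ∀ s ∈ Icc (0:ℝ) 1, HasDerivAt
        (fun u : ℝ => F (p + u • h) (q - h) - F p ((q - h) + u • h))
        (h * G (p + s • h) (q - h) - h * G2 p ((q - h) + s • h)) s := by
      intro s hs
      have d1 : HasDerivAt (fun u : ℝ => F (p + u • h) (q - h))
          (h * G (p + s • h) (q - h)) s := by
        rw [hGdefp]
        exact hasDerivAt_affine (hFa _ (hαU (hsub (hball1 s hs))) _ (hβV (hsub' hqh)))
      have d2 : HasDerivAt (fun u : ℝ => F p ((q - h) + u • h))
          (h * G2 p ((q - h) + s • h)) s := by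
        rw [hG2defp]
        have hpU : p ∈ U := hαU (ball_subset_ball (by linarith) hp)
        exact hasDerivAt_affine (hFb _ hpU _ (hβV (hsub' (hball2 s hs))))
      exact d1.sub d2
    have hbound : ∀ s ∈ Icc (0:ℝ) 1,
        ‖h * G (p + s • h) (q - h) - h * G2 p ((q - h) + s • h)‖ ≤ (2*L*‖h‖) * ‖h‖ := by
      intro s hs
      have hpU : p ∈ U := hαU (ball_subset_ball (by linarith) hp)
      have e1 : G2 p ((q - h) + s • h) = G p ((q - h) + s • h) :=
        (hGG2 p hpU _ (hβV (hsub' (hball2 s hs)))).symm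
      rw [← mul_sub, norm_mul, e1]
      have t1 : ‖G (p + s • h) (q - h) - G p (q - h)‖ ≤ L * ‖h‖ := by
        have := hLip1 (q - h) (hsub' hqh) (p + s • h) (hball1 s hs) p
          (ball_subset_ball (by linarith) hp)
        rw [show p + s • h - p = s • h from by abel] at this
        refine this.trans ?_
        exact mul_le_mul_of_nonneg_left (hnorm_smul s hs) hL0
      have t2 : ‖G p (q - h) - G p ((q - h) + s • h)‖ ≤ L * ‖h‖ := by
        have := hLip2 p (ball_subset_ball (by linarith) hp) (q - h) hqh
          ((q - h) + s • h) (hball2 s hs)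
        rw [show q - h - (q - h + s • h) = -(s • h) from by abel, norm_neg] at this
        refine this.trans ?_
        exact mul_le_mul_of_nonneg_left (hnorm_smul s hs) hL0
      have t3 : ‖G (p + s • h) (q - h) - G p ((q - h) + s • h)‖ ≤ 2*L*‖h‖ := by
        calc ‖G (p + s • h) (q - h) - G p ((q - h) + s • h)‖
            ≤ ‖G (p + s • h) (q - h) - G p (q - h)‖ + ‖G p (q - h) - G p ((q - h) + s • h)‖ :=
              norm_sub_le_norm_sub_add_norm_sub _ _ _
          _ ≤ L * ‖h‖ + L * ‖h‖ := add_le_add t1 t2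
          _ = 2*L*‖h‖ := by ring
      calc ‖h‖ * ‖G (p + s • h) (q - h) - G p ((q - h) + s • h)‖
          ≤ ‖h‖ * (2*L*‖h‖) := mul_le_mul_of_nonneg_left t3 (norm_nonneg _)
        _ = (2*L*‖h‖) * ‖h‖ := by ring
    have hm := mvt01 hder hbound
    simp only [one_smul, zero_smul, add_zero, sub_add_cancel, sub_self, sub_zero] at hm
    calc ‖F (p + h) (q - h) - F p q‖ ≤ (2*L*‖h‖) * ‖h‖ := hm
      _ = (2*L) * ‖h‖^2 := by ring
  have hLoc : ∀ p ∈ ball α (R/16), ∀ p' ∈ ball α (R/16), ∀ q ∈ ball β (R/16),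
      ∀ q' ∈ ball β (R/16), p + q = p' + q' → F p q = F p' q' := by
    intro p hp p' hp' q hq q' hq' hsum
    set t := p' - p with htdef
    have hq'eq : q' = q - t := by rw [htdef]; linear_combination - hsum
    have ht : ‖t‖ < R/8 := by
      rw [htdef, show p' - p = (p' - α) + -(p - α) from by abel]
      have h1 : ‖p' - α‖ < R/16 := by rw [← dist_eq_norm]; exact mem_ball.1 hp'
      have h2 : ‖p - α‖ < R/16 := by rw [← dist_eq_norm]; exact mem_ball.1 hp
      calc ‖(p' - α) + -(p - α)‖ ≤ ‖p' - α‖ + ‖-(p - α)‖ := norm_add_le _ _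
        _ = ‖p' - α‖ + ‖p - α‖ := by rw [norm_neg]
        _ < R/8 := by linarith
    have key : ∀ N : ℕ, 0 < N → ‖F p' q' - F p q‖ ≤ (2*L*‖t‖^2)/N := by
      intro N hN
      have hNR : (0:ℝ) < N := Nat.cast_pos.2 hN
      set pk : ℕ → ℂ := fun k => p + ((k:ℝ)/N) • t with hpk
      set qk : ℕ → ℂ := fun k => q - ((k:ℝ)/N) • t with hqk
      have hmem : ∀ k ≤ N, pk k ∈ ball α (R/16) ∧ qk k ∈ ball β (R/16) := by
        intro k hk
        have h0 : (0:ℝ) ≤ (k:ℝ)/N := by positivity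
        have h1 : (k:ℝ)/N ≤ 1 := by
          rw [div_le_one hNR]; exact_mod_cast hk
        constructor
        · exact convex_seg_mem (convex_ball α (R/16)) hp hp' h0 h1
        · have := convex_seg_mem (convex_ball β (R/16)) hq hq' h0 h1
          have e : q + ((k:ℝ)/N) • (q' - q) = qk k := by
            rw [hqk, hq'eq, show q - t - q = -t from by abel, smul_neg, ← sub_eq_add_neg]
          rwa [e] at this
      have hchain : ∀ k ≤ N, ‖F (pk k) (qk k) - F p q‖ ≤ k * ((2*L) * (‖t‖/N)^2) := by
        intro k
        induction k with
        | zero =>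
          intro _
          have e0 : pk 0 = p := by simp [hpk]
          have e0' : qk 0 = q := by simp [hqk]
          rw [e0, e0']
          simp
        | succ k ih =>
          intro hk1
          have hk : k ≤ N := Nat.le_of_succ_le hk1
          have ihk := ih hk
          set h : ℂ := ((1:ℝ)/N) • t with hhdef
          have hh : ‖h‖ = ‖t‖/N := by
            rw [hhdef, norm_smul, Real.norm_eq_abs, abs_of_nonneg (by positivity)]
            ring
          have hhle : ‖h‖ ≤ R/8 := by
            rw [hh]
            have h1 : ‖t‖/N ≤ ‖t‖ := by
              apply div_le_self (norm_nonneg t)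
              exact_mod_cast hN
            linarith
          have epk : pk (k+1) = pk k + h := by
            rw [hpk, hhdef]
            simp only []
            rw [add_assoc, ← add_smul]
            congr 2
            push_cast
            field_simp
          have eqk : qk (k+1) = qk k - h := by
            rw [hqk, hhdef]
            simp only []
            rw [sub_sub, ← add_smul]
            congr 2
            push_cast
            field_simp
          have hmemk := hmem k hk
          have hstep := hStep (pk k) (ball_subset_ball (by linarith) hmemk.1)
            (qk k) (ball_subset_ball (by linarith) hmemk.2) h hhle
          rw [← epk, ← eqk] at hstep
          calc ‖F (pk (k+1)) (qk (k+1)) - F p q‖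
              ≤ ‖F (pk (k+1)) (qk (k+1)) - F (pk k) (qk k)‖ + ‖F (pk k) (qk k) - F p q‖ :=
                norm_sub_le_norm_sub_add_norm_sub _ _ _
            _ ≤ (2*L) * ‖h‖^2 + k * ((2*L) * (‖t‖/N)^2) := add_le_add hstep ihk
            _ = (k+1 : ℕ) * ((2*L) * (‖t‖/N)^2) := by rw [hh]; push_cast; ring
      have hNfin := hchain N le_rfl
      have epN : pk N = p' := by
        rw [hpk]
        simp only []
        rw [div_self (ne_of_gt hNR), one_smul, htdef]
        abel
      have eqN : qk N = q' := by
        rw [hqk]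
        simp only []
        rw [div_self (ne_of_gt hNR), one_smul, hq'eq]
      rw [epN, eqN] at hNfin
      calc ‖F p' q' - F p q‖ ≤ N * ((2*L) * (‖t‖/N)^2) := hNfin
        _ = (2*L*‖t‖^2)/N := by field_simp
    have hzero : F p' q' - F p q = 0 := by
      by_contra hne
      have hpos : 0 < ‖F p' q' - F p q‖ := norm_pos_iff.2 hne
      obtain ⟨N, hN⟩ := exists_nat_gt ((2*L*‖t‖^2) / ‖F p' q' - F p q‖)
      have hN0 : 0 < N := by
        by_contra hc
        push_neg at hc
        interval_cases N
        · simp only [Nat.cast_zero] at hN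
          have : 0 ≤ (2*L*‖t‖^2) / ‖F p' q' - F p q‖ := by positivity
          linarith
      have hkey := key N hN0
      have hNR : (0:ℝ) < N := Nat.cast_pos.2 hN0
      have : (2*L*‖t‖^2)/N < ‖F p' q' - F p q‖ := by
        rw [div_lt_iff₀ hNR]
        have := (div_lt_iff₀ hpos).1 hN
        linarith
      linarith
    have := sub_eq_zero.1 hzero
    exact this.symm
  have hClaimB : ∀ p ∈ ball α (R/32), ∀ t : ℂ, ‖t‖ < R/32 → ∀ w ∈ V, w + t ∈ V →
      F (p + t) w = F p (w + t) := by
    intro p hp t ht w hw hwt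
    have hpα : ‖p - α‖ < R/32 := by rw [← dist_eq_norm]; exact mem_ball.1 hp
    have hpU : p ∈ U := hαU (ball_subset_ball (by linarith) hp)
    have hptα : ‖p + t - α‖ < R/16 := by
      calc ‖p + t - α‖ = ‖(p - α) + t‖ := by rw [show p + t - α = (p - α) + t from by abel]
        _ ≤ ‖p - α‖ + ‖t‖ := norm_add_le _ _
        _ < R/16 := by linarith
    have hptU : p + t ∈ U := by
      apply hαU
      rw [mem_ball, dist_eq_norm]
      linarith
    set S := V ∩ {w : ℂ | w + t ∈ V} with hSdef
    have hSo : IsOpen S := by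
      apply hVo.inter
      have : {w : ℂ | w + t ∈ V} = (fun w => w + t) ⁻¹' V := rfl
      rw [this]
      exact hVo.preimage (continuous_id.add continuous_const)
    have hSc : Convex ℝ S := hVc.inter (convex_shift hVc t)
    set g : ℂ → ℂ := fun w => F (p + t) w - F p (w + t) with hgdef
    have hg : DifferentiableOn ℂ g S := by
      intro w hwS
      have d1 : DifferentiableAt ℂ (fun w => F (p + t) w) w := hFb (p + t) hptU w hwS.1
      have d2 : DifferentiableAt ℂ (fun w => F p (w + t)) w := by
        have := (hFb p hpU (w + t) hwS.2).comp w (differentiableAt_id.add_const t)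
        exact this
      exact (d1.sub d2).differentiableWithinAt
    have hβS : β ∈ S := by
      refine ⟨hβV (mem_ball_self hR), ?_⟩
      show β + t ∈ V
      apply hβV
      rw [mem_ball, dist_eq_norm, show β + t - β = t from by abel]
      linarith
    have hzero : ∀ w ∈ ball β (R/32) ∩ S, g w = 0 := by
      intro w ⟨hwb, hwS⟩
      have hwβ : ‖w - β‖ < R/32 := by rw [← dist_eq_norm]; exact mem_ball.1 hwb
      have h1 : p + t ∈ ball α (R/16) := by rw [mem_ball, dist_eq_norm]; linarith
      have h2 : p ∈ ball α (R/16) := ball_subset_ball (by linarith) hp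
      have h3 : w ∈ ball β (R/16) := ball_subset_ball (by linarith) hwb
      have h4 : w + t ∈ ball β (R/16) := by
        rw [mem_ball, dist_eq_norm, show w + t - β = (w - β) + t from by abel]
        calc ‖(w - β) + t‖ ≤ ‖w - β‖ + ‖t‖ := norm_add_le _ _
          _ < R/16 := by linarith
      have := hLoc (p + t) h1 p h2 w h3 (w + t) h4 (by ring)
      rw [hgdef]
      simp only [this, sub_self]
    have := eq_zero_on_convex hSo hSc hg hβS (by linarith : (0:ℝ) < R/32) hzero
      (⟨hw, hwt⟩ : w ∈ S)
    rw [hgdef] at this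
    simpa [sub_eq_zero] using this
  have hClaimC : ∀ t : ℂ, ‖t‖ < R/32 → ∀ p ∈ U, p + t ∈ U → ∀ w ∈ V, w + t ∈ V →
      F (p + t) w = F p (w + t) := by
    intro t ht p hpU hptU w hwV hwtV
    set S := U ∩ {p : ℂ | p + t ∈ U} with hSdef
    have hSo : IsOpen S := by
      apply hUo.inter
      have : {p : ℂ | p + t ∈ U} = (fun p => p + t) ⁻¹' U := rfl
      rw [this]
      exact hUo.preimage (continuous_id.add continuous_const)
    have hSc : Convex ℝ S := hUc.inter (convex_shift hUc t)
    set g : ℂ → ℂ := fun p => F (p + t) w - F p (w + t) with hgdef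
    have hg : DifferentiableOn ℂ g S := by
      intro p hpS
      have d1 : DifferentiableAt ℂ (fun p => F (p + t) w) p := by
        have := (hFa (p + t) hpS.2 w hwV).comp p (differentiableAt_id.add_const t)
        exact this
      have d2 : DifferentiableAt ℂ (fun p => F p (w + t)) p := hFa p hpS.1 (w + t) hwtV
      exact (d1.sub d2).differentiableWithinAt
    have hαS : α ∈ S := by
      refine ⟨hαU (mem_ball_self hR), ?_⟩
      show α + t ∈ U
      apply hαU
      rw [mem_ball, dist_eq_norm, show α + t - α = t from by abel]
      linarith
    have hzero : ∀ p ∈ ball α (R/32) ∩ S, g p = 0 := by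
      intro p ⟨hpb, _⟩
      have := hClaimB p hpb t ht w hwV hwtV
      rw [hgdef]
      simp only [this, sub_self]
    have := eq_zero_on_convex hSo hSc hg hαS (by linarith : (0:ℝ) < R/32) hzero
      (⟨hpU, hptU⟩ : p ∈ S)
    rw [hgdef] at this
    simpa [sub_eq_zero] using this
  set t := a' - a with htdef
  have hb'eq : b' = b - t := by rw [htdef]; linear_combination - hs
  obtain ⟨N, hN⟩ := exists_nat_gt (‖t‖ / (R/32))
  set m : ℕ := N + 1 with hmdef
  have hmR : (0:ℝ) < m := by positivity
  have htm : ‖t‖ / m < R/32 := by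
    rw [div_lt_iff₀ hmR]
    have h1 : ‖t‖ / (R/32) < m := by
      rw [hmdef]; push_cast; linarith
    rw [div_lt_iff₀ (by linarith : (0:ℝ) < R/32)] at h1
    linarith
  set pk : ℕ → ℂ := fun k => a + ((k:ℝ)/m) • t with hpk
  set qk : ℕ → ℂ := fun k => b - ((k:ℝ)/m) • t with hqk
  have hmem : ∀ k ≤ m, pk k ∈ U ∧ qk k ∈ V := by
    intro k hk
    have h0 : (0:ℝ) ≤ (k:ℝ)/m := by positivity
    have h1 : (k:ℝ)/m ≤ 1 := by
      rw [div_le_one hmR]; exact_mod_cast hk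
    constructor
    · exact convex_seg_mem hUc ha ha' h0 h1
    · have := convex_seg_mem hVc hb hb' h0 h1
      have e : b + ((k:ℝ)/m) • (b' - b) = qk k := by
        rw [hqk, hb'eq, show b - t - b = -t from by abel, smul_neg, ← sub_eq_add_neg]
      rwa [e] at this
  set h : ℂ := ((1:ℝ)/m) • t with hhdef
  have hh : ‖h‖ = ‖t‖/m := by
    rw [hhdef, norm_smul, Real.norm_eq_abs, abs_of_nonneg (by positivity)]
    ring
  have hhlt : ‖h‖ < R/32 := by rw [hh]; exact htm
  have epk : ∀ k : ℕ, pk (k+1) = pk k + h := by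
    intro k
    rw [hpk, hhdef]
    simp only []
    rw [add_assoc, ← add_smul]
    congr 2
    push_cast
    field_simp
  have eqk : ∀ k : ℕ, qk (k+1) = qk k - h := by
    intro k
    rw [hqk, hhdef]
    simp only []
    rw [sub_sub, ← add_smul]
    congr 2
    push_cast
    field_simp
  have hchain : ∀ k ≤ m, F (pk k) (qk k) = F a b := by
    intro k
    induction k with
    | zero =>
      intro _
      have e0 : pk 0 = a := by simp [hpk]
      have e0' : qk 0 = b := by simp [hqk]
      rw [e0, e0']
    | succ k ih =>
      intro hk1
      have hk : k ≤ m := Nat.le_of_succ_le hk1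
      have hmk := hmem k hk
      have hmk1 := hmem (k+1) hk1
      have step := hClaimC h hhlt (pk k) hmk.1 (by rw [← epk k]; exact hmk1.1)
        (qk (k+1)) hmk1.2 (by rw [show qk (k+1) + h = qk k from by rw [eqk k]; abel]; exact hmk.2)
      rw [epk k, step, show qk (k+1) + h = qk k from by rw [eqk k]; abel]
      exact ih hk
  have hfin := hchain m le_rfl
  have epN : pk m = a' := by
    rw [hpk]
    simp only []
    rw [div_self (ne_of_gt hmR), one_smul, htdef]
    abel
  have eqN : qk m = b' := by
    rw [hqk]
    simp only []
    rw [div_self (ne_of_gt hmR), one_smul, hb'eq]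
  rw [epN, eqN] at hfin
  exact hfin.symm
private lemma exchange {d : ℕ} {Ω : Fin d → Set ℂ}
    (hΩo : ∀ i, IsOpen (Ω i)) (hΩc : ∀ i, Convex ℝ (Ω i))
    {Q : (Fin d → ℂ) → ℂ}
    (hhol : ∀ (i : Fin d) (x : Fin d → ℂ), (∀ j, x j ∈ Ω j) →
      DifferentiableAt ℂ (fun z => Q (Function.update x i z)) (x i))
    (hderiv : ∀ (i j : Fin d) (x : Fin d → ℂ), (∀ k, x k ∈ Ω k) →
      deriv (fun z => Q (Function.update x i z)) (x i)
        = deriv (fun z => Q (Function.update x j z)) (x j))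
    (i j : Fin d) (hij : i ≠ j) (w w' : Fin d → ℂ)
    (hw : ∀ l, w l ∈ Ω l) (hw' : ∀ l, w' l ∈ Ω l)
    (hoff : ∀ l, l ≠ i → l ≠ j → w l = w' l)
    (hsum2 : w i + w j = w' i + w' j) : Q w = Q w' := by
  set F : ℂ → ℂ → ℂ := fun a b => Q (Function.update (Function.update w i a) j b) with hFdef
  have hXmem : ∀ a ∈ Ω i, ∀ b ∈ Ω j, ∀ l,
      Function.update (Function.update w i a) j b l ∈ Ω l := by
    intro a hha b hhb l
    rcases eq_or_ne l j with rfl | hlj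
    · rwa [Function.update_self]
    · rw [Function.update_of_ne hlj]
      rcases eq_or_ne l i with rfl | hli
      · rwa [Function.update_self]
      · rw [Function.update_of_ne hli]; exact hw l
  have keyi : ∀ a b z, Function.update (Function.update (Function.update w i a) j b) i z
      = Function.update (Function.update w i z) j b := by
    intro a b z
    rw [Function.update_comm hij.symm, Function.update_idem]
  have keyj : ∀ a b z, Function.update (Function.update (Function.update w i a) j b) j z
      = Function.update (Function.update w i a) j z := by
    intro a b z
    rw [Function.update_idem]
  have hXi : ∀ a b, Function.update (Function.update w i a) j b i = a := by
    intro a b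
    rw [Function.update_of_ne hij, Function.update_self]
  have hXj : ∀ a b, Function.update (Function.update w i a) j b j = b := by
    intro a b
    rw [Function.update_self]
  have hFa : ∀ a ∈ Ω i, ∀ b ∈ Ω j, DifferentiableAt ℂ (fun z => F z b) a := by
    intro a hha b hhb
    have := hhol i (Function.update (Function.update w i a) j b) (hXmem a hha b hhb)
    rw [hXi a b] at this
    have e : (fun z => Q (Function.update (Function.update (Function.update w i a) j b) i z))
        = fun z => F z b := by
      funext z; rw [keyi]
    rwa [e] at this
  have hFb : ∀ a ∈ Ω i, ∀ b ∈ Ω j, DifferentiableAt ℂ (fun z => F a z) b := by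
    intro a hha b hhb
    have := hhol j (Function.update (Function.update w i a) j b) (hXmem a hha b hhb)
    rw [hXj a b] at this
    have e : (fun z => Q (Function.update (Function.update (Function.update w i a) j b) j z))
        = fun z => F a z := by
      funext z; rw [keyj]
    rwa [e] at this
  have hEq : ∀ a ∈ Ω i, ∀ b ∈ Ω j,
      deriv (fun z => F z b) a = deriv (fun z => F a z) b := by
    intro a hha b hhb
    have := hderiv i j (Function.update (Function.update w i a) j b) (hXmem a hha b hhb)
    rw [hXi a b, hXj a b] at this
    have e1 : (fun z => Q (Function.update (Function.update (Function.update w i a) j b) i z))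
        = fun z => F z b := by funext z; rw [keyi]
    have e2 : (fun z => Q (Function.update (Function.update (Function.update w i a) j b) j z))
        = fun z => F a z := by funext z; rw [keyj]
    rwa [e1, e2] at this
  have hQw : Q w = F (w i) (w j) := by
    rw [hFdef]
    simp only []
    rw [Function.update_eq_self, Function.update_eq_self]
  have hQw' : Q w' = F (w' i) (w' j) := by
    have e : Function.update (Function.update w i (w' i)) j (w' j) = w' := by
      funext l
      rcases eq_or_ne l j with rfl | hlj
      · rw [Function.update_self]
      · rw [Function.update_of_ne hlj]
        rcases eq_or_ne l i with rfl | hli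
        · rw [Function.update_self]
        · rw [Function.update_of_ne hli]; exact hoff l hli hlj
    rw [hFdef]
    simp only []
    rw [e]
  rw [hQw, hQw']
  exact lemma2D (hΩo i) (hΩo j) (hΩc i) (hΩc j) F hFa hFb hEq
    (hw i) (hw' i) (hw j) (hw' j) hsum2
/-- If `Q` is holomorphic in each coordinate separately on a product of open convex
sets and all its partial derivatives coincide, then `Q` factors through the sum of
its coordinates. -/
theorem stmt_0 (d : ℕ) (hd : 1 ≤ d) (Ω : Fin d → Set ℂ)
    (hΩo : ∀ i, IsOpen (Ω i)) (hΩc : ∀ i, Convex ℝ (Ω i))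
    (Q : (Fin d → ℂ) → ℂ)
    (hhol : ∀ (i : Fin d) (x : Fin d → ℂ), (∀ j, x j ∈ Ω j) →
      DifferentiableAt ℂ (fun z => Q (Function.update x i z)) (x i))
    (hderiv : ∀ (i j : Fin d) (x : Fin d → ℂ), (∀ k, x k ∈ Ω k) →
      deriv (fun z => Q (Function.update x i z)) (x i)
        = deriv (fun z => Q (Function.update x j z)) (x j))
    (x x' : Fin d → ℂ) (hx : ∀ j, x j ∈ Ω j) (hx' : ∀ j, x' j ∈ Ω j)
    (hsum : ∑ j, x j = ∑ j, x' j) :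
    Q x = Q x' := by
  have hdpos : 0 < d := hd
  have hseg : ∀ i, segment ℝ (x i) (x' i) ⊆ Ω i :=
    fun i => (hΩc i).segment_subset (hx i) (hx' i)
  have hthick : ∀ i, ∃ δ > 0, Metric.thickening δ (segment ℝ (x i) (x' i)) ⊆ Ω i :=
    fun i => (isCompact_seg (x i) (x' i)).exists_thickening_subset_open (hΩo i) (hseg i)
  choose δ hδpos hδ using hthick
  have hne : (Finset.univ : Finset (Fin d)).Nonempty := ⟨⟨0, hdpos⟩, Finset.mem_univ _⟩
  set r := Finset.univ.inf' hne δ with hrdef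
  have hr : 0 < r := (Finset.lt_inf'_iff hne).2 fun i _ => hδpos i
  have hball : ∀ i, ∀ p ∈ segment ℝ (x i) (x' i), ball p r ⊆ Ω i := by
    intro i p hp q hq
    apply hδ i
    rw [Metric.mem_thickening_iff]
    exact ⟨p, hp, lt_of_lt_of_le (mem_ball.1 hq)
      (Finset.inf'_le _ (Finset.mem_univ i))⟩
  set C := ∑ j : Fin d, ‖x j - x' j‖ with hCdef
  have hC0 : 0 ≤ C := Finset.sum_nonneg fun j _ => norm_nonneg _
  obtain ⟨N, hN⟩ := exists_nat_gt (C / r)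
  set M : ℕ := N + 1 with hMdef
  have hM : (0:ℝ) < M := by positivity
  have hCM : C / M < r := by
    rw [div_lt_iff₀ hM]
    rw [div_lt_iff₀ hr] at hN
    have : (N:ℝ) ≤ M := by rw [hMdef]; push_cast; linarith
    nlinarith
  set w : ℕ → Fin d → ℂ := fun m i => x i + ((m:ℝ)/M) • (x' i - x i) with hwdef
  have hwseg : ∀ m, m ≤ M → ∀ i, w m i ∈ segment ℝ (x i) (x' i) := by
    intro m hm i
    apply convex_seg_mem (convex_segment _ _) (left_mem_segment ℝ _ _)
      (right_mem_segment ℝ _ _)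
    · positivity
    · rw [div_le_one hM]; exact_mod_cast hm
  have hwΩ : ∀ m, m ≤ M → ∀ i, w m i ∈ Ω i := fun m hm i => hseg i (hwseg m hm i)
  have hwstep : ∀ m : ℕ, ∀ i, w (m+1) i = w m i + ((1:ℝ)/M) • (x' i - x i) := by
    intro m i
    simp only [hwdef]
    rw [add_assoc, ← add_smul]
    congr 2
    push_cast
    ring
  set E : ℕ → ℂ := fun k =>
    ((1:ℝ)/M) • ∑ j ∈ Finset.univ.filter (fun j : Fin d => (j:ℕ) < k), (x j - x' j) with hEdef
  have hE : ∀ k, ‖E k‖ < r := by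
    intro k
    have h1 : ‖∑ j ∈ Finset.univ.filter (fun j : Fin d => (j:ℕ) < k), (x j - x' j)‖ ≤ C := by
      refine (norm_sum_le _ _).trans ?_
      rw [hCdef]
      exact Finset.sum_le_sum_of_subset_of_nonneg (Finset.filter_subset _ _)
        (fun j _ _ => norm_nonneg _)
    have h2 : ‖E k‖ ≤ (1/M) * C := by
      rw [hEdef]
      simp only []
      rw [norm_smul, Real.norm_eq_abs, abs_of_nonneg (by positivity)]
      exact mul_le_mul_of_nonneg_left h1 (by positivity)
    calc ‖E k‖ ≤ (1/M) * C := h2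
      _ = C / M := by ring
      _ < r := hCM
  have hE0 : E 0 = 0 := by
    rw [hEdef]
    simp only []
    have : Finset.univ.filter (fun j : Fin d => (j:ℕ) < 0) = ∅ := by
      apply Finset.filter_eq_empty_iff.2
      intro j _
      omega
    rw [this, Finset.sum_empty, smul_zero]
  have hEstep : ∀ k : ℕ, ∀ hk : k < d,
      E (k+1) = E k + ((1:ℝ)/M) • (x ⟨k, hk⟩ - x' ⟨k, hk⟩) := by
    intro k hk
    have hfil : Finset.univ.filter (fun j : Fin d => (j:ℕ) < k+1)
        = insert ⟨k, hk⟩ (Finset.univ.filter (fun j : Fin d => (j:ℕ) < k)) := by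
      ext j
      simp only [Finset.mem_filter, Finset.mem_univ, true_and, Finset.mem_insert, Fin.ext_iff]
      omega
    have hnotmem : (⟨k, hk⟩ : Fin d) ∉ Finset.univ.filter (fun j : Fin d => (j:ℕ) < k) := by
      simp
    rw [hEdef]
    simp only []
    rw [hfil, Finset.sum_insert hnotmem, smul_add, add_comm]
  have hElast : E (d-1) = ((1:ℝ)/M) • (x' ⟨d-1, by omega⟩ - x ⟨d-1, by omega⟩) := by
    set dl : Fin d := ⟨d-1, by omega⟩ with hdl
    have hfil : Finset.univ.filter (fun j : Fin d => (j:ℕ) < d-1) = Finset.univ.erase dl := by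
      ext j
      simp only [Finset.mem_filter, Finset.mem_univ, true_and, Finset.mem_erase, and_true]
      constructor
      · intro hj hj'
        rw [hj'] at hj
        simp only [hdl] at hj
        omega
      · intro hj
        have : (j:ℕ) ≠ d-1 := by
          intro hc
          exact hj (Fin.ext hc)
        omega
    have hzero : ∑ j : Fin d, (x j - x' j) = 0 := by
      rw [Finset.sum_sub_distrib, sub_eq_zero]
      exact hsum
    rw [hEdef]
    simp only []
    rw [hfil, Finset.sum_erase_eq_sub (Finset.mem_univ dl), hzero]
    congr 1
    abel
  set z : ℕ → ℕ → Fin d → ℂ := fun m k i =>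
    if (i:ℕ) < k then w (m+1) i else if (i:ℕ) = k then w m i + E k else w m i with hzdef
  have hz0 : ∀ m, z m 0 = w m := by
    intro m
    funext i
    simp only [hzdef]
    rw [if_neg (by omega)]
    split_ifs with h
    · rw [hE0, add_zero]
    · rfl
  have hzd : ∀ m, z m d = w (m+1) := by
    intro m
    funext i
    simp only [hzdef]
    rw [if_pos i.isLt]
  have hzlast : ∀ m, z m (d-1) = z m d := by
    intro m
    funext i
    simp only [hzdef]
    rcases lt_trichotomy (i:ℕ) (d-1) with h | h | h
    · rw [if_pos h, if_pos (by omega)]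
    · rw [if_neg (by omega), if_pos h, if_pos (by omega)]
      have hieq : i = (⟨d-1, by omega⟩ : Fin d) := Fin.ext h
      rw [hieq] at *
      rw [hElast, ← hwstep m]
    · have := i.isLt
      omega
  have hzΩ : ∀ m, m < M → ∀ k, ∀ i, z m k i ∈ Ω i := by
    intro m hm k i
    simp only [hzdef]
    split_ifs with h1 h2
    · exact hwΩ (m+1) (by omega) i
    · have hwm : w m i ∈ segment ℝ (x i) (x' i) := hwseg m (by omega) i
      apply hball i (w m i) hwm
      rw [mem_ball, dist_eq_norm, show w m i + E k - w m i = E k from by abel]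
      exact hE k
    · exact hwΩ m (by omega) i
  have hstep : ∀ m, m < M → ∀ k, k + 1 < d → Q (z m k) = Q (z m (k+1)) := by
    intro m hm k hk1
    have hk : k < d := by omega
    obtain ⟨i, hival⟩ : ∃ i : Fin d, (i:ℕ) = k := ⟨⟨k, hk⟩, rfl⟩
    obtain ⟨j, hjval⟩ : ∃ j : Fin d, (j:ℕ) = k+1 := ⟨⟨k+1, hk1⟩, rfl⟩
    have hij : i ≠ j := by
      intro hc
      have h2 := congrArg Fin.val hc
      rw [hival, hjval] at h2
      omega
    apply exchange hΩo hΩc hhol hderiv i j hij _ _ (hzΩ m hm k) (hzΩ m hm (k+1))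
    · intro l hli hlj
      have hlk : (l:ℕ) ≠ k := by
        intro hc
        exact hli (Fin.ext (by rw [hival]; exact hc))
      have hlk1 : (l:ℕ) ≠ k+1 := by
        intro hc
        exact hlj (Fin.ext (by rw [hjval]; exact hc))
      simp only [hzdef]
      rcases lt_trichotomy (l:ℕ) k with h | h | h
      · rw [if_pos h, if_pos (by omega)]
      · omega
      · rw [if_neg (by omega), if_neg (by omega), if_neg (by omega), if_neg (by omega)]
    · have ezi1 : z m k i = w m i + E k := by
        simp only [hzdef]
        rw [if_neg (show ¬((i:ℕ) < k) from by rw [hival]; omega), if_pos hival]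
      have ezj1 : z m k j = w m j := by
        simp only [hzdef]
        rw [if_neg (show ¬((j:ℕ) < k) from by rw [hjval]; omega),
          if_neg (show ¬((j:ℕ) = k) from by rw [hjval]; omega)]
      have ezi2 : z m (k+1) i = w (m+1) i := by
        simp only [hzdef]
        rw [if_pos (show (i:ℕ) < k+1 from by rw [hival]; omega)]
      have ezj2 : z m (k+1) j = w m j + E (k+1) := by
        simp only [hzdef]
        rw [if_neg (show ¬((j:ℕ) < k+1) from by rw [hjval]; omega), if_pos hjval]
      have hieq : i = (⟨k, hk⟩ : Fin d) := Fin.ext hival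
      rw [ezi1, ezj1, ezi2, ezj2, hwstep m i, hEstep k hk, ← hieq]
      have e3 : ((1:ℝ)/M) • (x' i - x i) + ((1:ℝ)/M) • (x i - x' i) = 0 := by
        rw [← smul_add]
        simp [show x' i - x i + (x i - x' i) = 0 from by abel]
      calc w m i + E k + w m j
          = (w m i + ((1:ℝ)/M) • (x' i - x i)) + (w m j + (E k + ((1:ℝ)/M) • (x i - x' i)))
            - (((1:ℝ)/M) • (x' i - x i) + ((1:ℝ)/M) • (x i - x' i)) := by abel
        _ = (w m i + ((1:ℝ)/M) • (x' i - x i)) + (w m j + (E k + ((1:ℝ)/M) • (x i - x' i))) := by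
            rw [e3, sub_zero]
  have hinner : ∀ m, m < M → ∀ k, k ≤ d → Q (z m 0) = Q (z m k) := by
    intro m hm k
    induction k with
    | zero => intro _; rfl
    | succ k ih =>
      intro hk1
      rcases lt_or_eq_of_le hk1 with h | h
      · exact (ih (by omega)).trans (hstep m hm k h)
      · have hkd : k = d - 1 := by omega
        have : z m k = z m (k+1) := by
          rw [hkd, show d - 1 + 1 = d from by omega]
          exact hzlast m
        rw [← this]
        exact ih (by omega)
  have houter : ∀ m, m ≤ M → Q (w 0) = Q (w m) := by
    intro m
    induction m with
    | zero => intro _; rfl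
    | succ m ih =>
      intro hm1
      have hm : m < M := by omega
      have h1 := hinner m hm d le_rfl
      rw [hz0 m, hzd m] at h1
      exact (ih (by omega)).trans h1
  have hw0 : w 0 = x := by
    funext i
    simp [hwdef]
  have hwM : w M = x' := by
    funext i
    simp only [hwdef]
    rw [div_self (ne_of_gt hM), one_smul]
    abel
  have := houter M le_rfl
  rwa [hw0, hwM] at this
end

section
/- Let H̃ be holomorphic on ℂ \ {0}, let R₁,…,R_d be nonconstant complex polynomials (d ≥ 1), and let f ∈ ℂ[x₁,…,x_d] be a polynomial such that f(x₁,…,x_d) = H̃(R₁(x₁)·…·R_d(x_d)) whenever all R_j(x_j) ≠ 0. If R₁ has a zero at some point a*, then H̃ is bounded near 0; consequently H̃ extends to an entire function. -/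
open Filter Metric Topology

/-- For each `j` we can pick a point where `R j` doesn't vanish. -/
lemma aux_exists_ne_zero (p : Polynomial ℂ) (hp : p ≠ 0) : ∃ b : ℂ, p.eval b ≠ 0 := by
  have hfin : {x : ℂ | p.IsRoot x}.Finite := Polynomial.finite_setOf_isRoot hp
  obtain ⟨b, hb⟩ := hfin.infinite_compl.nonempty
  exact ⟨b, hb⟩

/-- If a polynomial `f` equals `H̃(R₁(x₁)·…·R_d(x_d))` off the zero sets of the
nonconstant polynomials `R_j`, where `H̃` is holomorphic on `ℂ \ {0}`, and `R₁` has
a zero, then `H̃` is bounded near `0` and extends to an entire function. -/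
theorem stmt_16 (d : ℕ) (hd : 0 < d) (H' : ℂ → ℂ)
    (hH' : DifferentiableOn ℂ H' {(0:ℂ)}ᶜ)
    (R : Fin d → Polynomial ℂ) (hR : ∀ j, 0 < (R j).natDegree)
    (f : MvPolynomial (Fin d) ℂ)
    (hf : ∀ x : Fin d → ℂ, (∀ j, (R j).eval (x j) ≠ 0) →
      MvPolynomial.eval x f = H' (∏ j, (R j).eval (x j)))
    (a : ℂ) (haz : (R ⟨0, hd⟩).eval a = 0) :
    (∃ C : ℝ, ∃ ε > (0:ℝ), ∀ w : ℂ, w ≠ 0 → ‖w‖ < ε →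
        ‖H' w‖ ≤ C) ∧
    ∃ G : ℂ → ℂ, Differentiable ℂ G ∧ ∀ w : ℂ, w ≠ 0 → G w = H' w := by
  classical
  set j₀ : Fin d := ⟨0, hd⟩
  -- choose points b j where R j doesn't vanish
  have hbex : ∀ j : Fin d, ∃ b : ℂ, (R j).eval b ≠ 0 := fun j =>
    aux_exists_ne_zero (R j) (fun h => by simpa [h] using (hR j))
  choose b hb using hbex
  -- the constant c
  set c : ℂ := ∏ j ∈ Finset.univ.erase j₀, (R j).eval (b j) with hc
  have hc0 : c ≠ 0 := Finset.prod_ne_zero_iff.2 fun j _ => hb j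
  -- preimages of small values under R j₀ are bounded
  have htend : Tendsto (fun t : ℂ => ‖(R j₀).eval t‖) (Bornology.cobounded ℂ) atTop := by
    apply Polynomial.tendsto_norm_atTop (R j₀)
      (Polynomial.natDegree_pos_iff_degree_pos.1 (hR j₀))
    exact tendsto_norm_cobounded_atTop
  have hev : ∀ᶠ t : ℂ in Bornology.cobounded ℂ, (1:ℝ) ≤ ‖(R j₀).eval t‖ :=
    htend.eventually (eventually_ge_atTop 1)
  rw [← comap_norm_atTop, eventually_comap, eventually_atTop] at hev
  obtain ⟨M, hM⟩ := hev
  -- bound f on the compact set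
  have hcont : Continuous fun t : ℂ => MvPolynomial.eval (Function.update b j₀ t) f := by
    apply (MvPolynomial.continuous_eval (p := f)).comp
    exact continuous_pi fun j => by
      rcases eq_or_ne j j₀ with rfl | hj
      · simpa using continuous_id'
      · simp only [Function.update_of_ne hj]
        exact continuous_const
  obtain ⟨C, hC⟩ := (isCompact_closedBall (0:ℂ) M).exists_bound_of_continuousOn
    hcont.continuousOn
  -- the key boundedness claim
  have key : ∀ w : ℂ, w ≠ 0 → ‖w‖ < ‖c‖ → ‖H' w‖ ≤ C := by
    intro w hw hwc
    -- find t with R j₀ (t) = w / c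
    have hdeg : 0 < ((R j₀) - Polynomial.C (w / c)).degree := by
      rw [Polynomial.degree_sub_C (Polynomial.natDegree_pos_iff_degree_pos.1 (hR j₀))]
      exact Polynomial.natDegree_pos_iff_degree_pos.1 (hR j₀)
    obtain ⟨t, ht⟩ := Complex.exists_root hdeg
    have ht' : (R j₀).eval t = w / c := by
      have := ht
      simp only [Polynomial.IsRoot, Polynomial.eval_sub, Polynomial.eval_C, sub_eq_zero] at this
      exact this
    -- t is in the closed ball
    have htb : t ∈ closedBall (0:ℂ) M := by
      by_contra h
      have h1 : M ≤ ‖t‖ := by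
        have := (not_le.1 (fun hle => h (by simpa [mem_closedBall, dist_eq_norm] using hle)))
        exact this.le
      have := hM ‖t‖ h1 t rfl
      rw [ht'] at this
      have hlt : ‖w / c‖ < 1 := by
        rw [norm_div, div_lt_one (by simpa using (norm_pos_iff.2 hc0))]
        simpa using hwc
      linarith
    -- evaluate f at the point
    set x : Fin d → ℂ := Function.update b j₀ t with hx
    have hxne : ∀ j, (R j).eval (x j) ≠ 0 := by
      intro j
      rcases eq_or_ne j j₀ with rfl | hj
      · simp only [hx, Function.update_self, ht']
        exact div_ne_zero hw hc0
      · simpa [hx, Function.update_of_ne hj] using hb j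
    have hprod : (∏ j, (R j).eval (x j)) = w := by
      rw [← Finset.prod_erase_mul _ _ (Finset.mem_univ j₀)]
      have : ∏ j ∈ Finset.univ.erase j₀, (R j).eval (x j) = c := by
        apply Finset.prod_congr rfl
        intro j hj
        rw [hx, Function.update_of_ne (Finset.ne_of_mem_erase hj)]
      rw [this, hx, Function.update_self, ht', mul_comm, div_mul_cancel₀ _ hc0]
    have := hf x hxne
    rw [hprod] at this
    rw [← this]
    simpa [hx] using hC t htb
  constructor
  · exact ⟨C, ‖c‖, by simpa using hc0, key⟩
  · -- removable singularity
    set s : Set ℂ := ball (0:ℂ) ‖c‖ with hs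
    have hsc : s ∈ 𝓝 (0:ℂ) := ball_mem_nhds _ (norm_pos_iff.2 hc0)
    have hdiff : DifferentiableOn ℂ H' (s \ {0}) :=
      hH'.mono (by intro z hz; simpa using hz.2)
    have hbdd : BddAbove (norm ∘ H' '' (s \ {0})) := by
      refine ⟨C, ?_⟩
      rintro r ⟨z, ⟨hz1, hz2⟩, rfl⟩
      have hz0 : z ≠ 0 := by simpa using hz2
      have : ‖z‖ < ‖c‖ := by simpa [hs, mem_ball, dist_eq_norm] using hz1
      simpa using key z hz0 this
    have hG := Complex.differentiableOn_update_limUnder_of_bddAbove hsc hdiff hbdd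
    refine ⟨Function.update H' 0 (limUnder (𝓝[≠] (0:ℂ)) H'), ?_, ?_⟩
    · intro z
      rcases eq_or_ne z 0 with rfl | hz
      · exact hG.differentiableAt hsc
      · have h1 : DifferentiableAt ℂ H' z :=
          (hH'.differentiableAt (isOpen_compl_singleton.mem_nhds hz))
        apply h1.congr_of_eventuallyEq
        filter_upwards [isOpen_compl_singleton.mem_nhds hz] with y hy
        exact Function.update_of_ne hy _ _
    · intro w hw
      exact Function.update_of_ne hw _ _
end

section
/- Let H : ℂ → ℂ be entire and let R₁,…,R_d be complex polynomials with at least one R_j nonconstant. If the function (x₁,…,x_d) ↦ H(R₁(x₁)+⋯+R_d(x_d)) is a polynomial in x₁,…,x_d, then H is a polynomial. -/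
open Polynomial


lemma evalBound (P : Polynomial ℂ) (m : ℕ) (hm : P.natDegree ≤ m) (t : ℂ) :
    ‖P.eval t‖ ≤ (∑ i ∈ Finset.range (P.natDegree + 1), ‖P.coeff i‖) * max 1 ‖t‖ ^ m := by
  rw [Polynomial.eval_eq_sum_range]
  calc ‖∑ i ∈ Finset.range (P.natDegree + 1), P.coeff i * t ^ i‖
      ≤ ∑ i ∈ Finset.range (P.natDegree + 1), ‖P.coeff i * t ^ i‖ := norm_sum_le _ _
    _ ≤ ∑ i ∈ Finset.range (P.natDegree + 1), ‖P.coeff i‖ * max 1 ‖t‖ ^ m := by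
        apply Finset.sum_le_sum
        intro i hi
        rw [norm_mul, norm_pow]
        apply mul_le_mul_of_nonneg_left _ (norm_nonneg _)
        calc ‖t‖ ^ i ≤ max 1 ‖t‖ ^ i := pow_le_pow_left₀ (norm_nonneg _) (le_max_right _ _) i
          _ ≤ max 1 ‖t‖ ^ m := pow_le_pow_right₀ (le_max_left _ _)
              (le_trans (Nat.lt_succ_iff.mp (Finset.mem_range.mp hi)) hm)
    _ = _ := (Finset.sum_mul _ _ _).symm

lemma rootBound (Q : Polynomial ℂ) (hQ : 0 < Q.natDegree) :
    ∃ B : ℝ, 1 ≤ B ∧ ∀ z : ℂ, ∃ t : ℂ, Q.eval t = z ∧ max 1 ‖t‖ ≤ B * max 1 ‖z‖ := by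
  have hQ0 : Q ≠ 0 := fun h => by simp [h] at hQ
  set a := Q.leadingCoeff with ha
  have hane : a ≠ 0 := Polynomial.leadingCoeff_ne_zero.mpr hQ0
  have hapos : (0:ℝ) < ‖a‖ := norm_pos_iff.mpr hane
  set S := ∑ i ∈ Finset.range (Q.eraseLead.natDegree + 1), ‖Q.eraseLead.coeff i‖ with hS
  have hSnn : 0 ≤ S := Finset.sum_nonneg fun i _ => norm_nonneg _
  refine ⟨1 + (1 + S) / ‖a‖, by
    have := div_nonneg (by linarith : (0:ℝ) ≤ 1 + S) hapos.le
    linarith, fun z => ?_⟩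
  -- root existence
  have hdg : 0 < Q.degree := Polynomial.natDegree_pos_iff_degree_pos.mp hQ
  have hdeg : 0 < (Q - Polynomial.C z).degree := by
    rwa [Polynomial.degree_sub_C hdg]
  obtain ⟨t, ht⟩ := Complex.exists_root hdeg
  have htz : Q.eval t = z := by
    have := ht
    simp [Polynomial.IsRoot, Polynomial.eval_sub, Polynomial.eval_C, sub_eq_zero] at this
    exact this
  refine ⟨t, htz, ?_⟩
  set M := max 1 ‖z‖ with hM
  have hM1 : (1:ℝ) ≤ M := le_max_left _ _
  have hzM : ‖z‖ ≤ M := le_max_right _ _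
  rcases le_or_gt ‖t‖ 1 with h1 | h1
  · rw [max_eq_left h1]
    nlinarith [div_nonneg (by linarith : (0:ℝ) ≤ 1 + S) hapos.le]
  · rw [max_eq_right h1.le]
    -- key inequality
    have hkey : ‖a‖ * ‖t‖ ^ Q.natDegree ≤ ‖z‖ + S * ‖t‖ ^ (Q.natDegree - 1) := by
      have hsplit : a * t ^ Q.natDegree = Q.eval t - Q.eraseLead.eval t := by
        have h := congrArg (Polynomial.eval t) Q.eraseLead_add_monomial_natDegree_leadingCoeff
        simp only [Polynomial.eval_add, Polynomial.eval_monomial] at h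
        rw [← h, ← ha]
        ring
      have h2 : ‖a * t ^ Q.natDegree‖ ≤ ‖Q.eval t‖ + ‖Q.eraseLead.eval t‖ := by
        rw [hsplit]; exact norm_sub_le _ _
      rw [norm_mul, norm_pow] at h2
      have h3 : ‖Q.eraseLead.eval t‖ ≤ S * max 1 ‖t‖ ^ (Q.natDegree - 1) :=
        evalBound _ _ (le_trans Q.eraseLead_natDegree_le (le_refl _)) t
      rw [max_eq_right h1.le] at h3
      rw [htz] at h2
      linarith
    have hu : (1:ℝ) ≤ ‖t‖ ^ (Q.natDegree - 1) := one_le_pow₀ h1.le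
    have hpow : ‖t‖ ^ Q.natDegree = ‖t‖ ^ (Q.natDegree - 1) * ‖t‖ := by
      rw [← pow_succ]
      congr 1
      omega
    rw [hpow] at hkey
    have hupos : (0:ℝ) < ‖t‖ ^ (Q.natDegree - 1) := by linarith
    have htle : ‖t‖ ≤ (1 + S) / ‖a‖ * M := by
      rw [div_mul_eq_mul_div, le_div_iff₀ hapos]
      have h5 : ‖a‖ * ‖t‖ * ‖t‖ ^ (Q.natDegree - 1) ≤ (1 + S) * M * ‖t‖ ^ (Q.natDegree - 1) := by
        calc ‖a‖ * ‖t‖ * ‖t‖ ^ (Q.natDegree - 1)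
            = ‖a‖ * (‖t‖ ^ (Q.natDegree - 1) * ‖t‖) := by ring
          _ ≤ ‖z‖ + S * ‖t‖ ^ (Q.natDegree - 1) := hkey
          _ ≤ (1 + S) * M * ‖t‖ ^ (Q.natDegree - 1) := by
              nlinarith [mul_nonneg (mul_nonneg hSnn hupos.le) (sub_nonneg.mpr hM1),
                mul_nonneg (by linarith : (0:ℝ) ≤ M) (sub_nonneg.mpr hu)]
      have := le_of_mul_le_mul_right h5 hupos
      linarith
    nlinarith

-- generalized Liouville
lemma growthPoly : ∀ (k : ℕ) (H : ℂ → ℂ), Differentiable ℂ H →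
    (∃ C : ℝ, ∀ z : ℂ, 1 ≤ ‖z‖ → ‖H z‖ ≤ C * ‖z‖ ^ k) →
    ∃ h : Polynomial ℂ, ∀ z : ℂ, H z = h.eval z := by
  intro k
  induction k with
  | zero =>
      intro H hH ⟨C, hC⟩
      obtain ⟨C', hC'⟩ := (isCompact_closedBall (0:ℂ) 1).exists_bound_of_continuousOn
        hH.continuous.continuousOn
      have hb : Bornology.IsBounded (Set.range H) := by
        rw [Metric.isBounded_iff_subset_closedBall 0]
        refine ⟨max C C', ?_⟩
        rintro _ ⟨z, rfl⟩
        simp only [Metric.mem_closedBall, dist_zero_right]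
        rcases le_or_gt 1 ‖z‖ with h1 | h1
        · exact le_trans (by simpa using hC z h1) (le_max_left _ _)
        · exact le_trans (hC' z (by simp [Metric.mem_closedBall]; exact h1.le)) (le_max_right _ _)
      obtain ⟨c, hc⟩ := hH.exists_eq_const_of_bounded hb
      exact ⟨Polynomial.C c, fun z => by simp [hc]⟩
  | succ k ih =>
      intro H hH ⟨C, hC⟩
      set G : ℂ → ℂ := dslope H 0 with hG
      have hGd : Differentiable ℂ G := by
        have : DifferentiableOn ℂ G Set.univ :=
          (Complex.differentiableOn_dslope (Filter.univ_mem)).mpr hH.differentiableOn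
        rw [← differentiableOn_univ]
        exact this
      have hbound : ∀ z : ℂ, 1 ≤ ‖z‖ → ‖G z‖ ≤ (C + ‖H 0‖) * ‖z‖ ^ k := by
        intro z hz
        have hzne : z ≠ 0 := by
          intro h; rw [h] at hz; simp at hz; linarith
        have : G z = (H z - H 0) / z := by
          rw [hG, dslope_of_ne _ hzne, slope_def_field]
          field_simp
          rw [sub_zero]
        rw [this, norm_div]
        have h1 : ‖H z - H 0‖ ≤ C * ‖z‖ ^ (k + 1) + ‖H 0‖ :=
          le_trans (norm_sub_le _ _) (by gcongr; exact hC z hz)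
        have hzpos : (0:ℝ) < ‖z‖ := by linarith
        rw [div_le_iff₀ hzpos]
        have hk : (1:ℝ) ≤ ‖z‖ ^ k := one_le_pow₀ hz
        calc ‖H z - H 0‖ ≤ C * ‖z‖ ^ (k + 1) + ‖H 0‖ := h1
          _ ≤ C * ‖z‖ ^ k * ‖z‖ + ‖H 0‖ * (‖z‖ ^ k * ‖z‖) := by
              rw [pow_succ]
              have h2 : (1:ℝ) ≤ ‖z‖ ^ k * ‖z‖ := by nlinarith
              nlinarith [norm_nonneg (H 0)]
          _ = (C + ‖H 0‖) * ‖z‖ ^ k * ‖z‖ := by ring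
      obtain ⟨g, hg⟩ := ih G hGd ⟨C + ‖H 0‖, hbound⟩
      refine ⟨Polynomial.C (H 0) + Polynomial.X * g, fun z => ?_⟩
      rcases eq_or_ne z 0 with rfl | hz
      · simp
      · have h1 : G z = (H z - H 0) / z := by
          rw [hG, dslope_of_ne _ hz, slope_def_field]; field_simp; rw [sub_zero]
        have h2 := hg z
        rw [h1] at h2
        field_simp at h2
        simp only [Polynomial.eval_add, Polynomial.eval_C, Polynomial.eval_mul, Polynomial.eval_X]
        rw [← hg z, h1]
        field_simp
        ring

lemma restrictEval (d : ℕ) (f : MvPolynomial (Fin d) ℂ) (j₀ : Fin d) (t : ℂ) :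
    (MvPolynomial.aeval (fun j => if j = j₀ then (Polynomial.X : Polynomial ℂ) else 0) f).eval t
      = MvPolynomial.eval (fun j => if j = j₀ then t else 0) f := by
  induction f using MvPolynomial.induction_on with
  | C a => simp
  | add p q hp hq => simp [hp, hq]
  | mul_X p i hp => by_cases h : i = j₀ <;> simp [hp, h]

/-- If `H` is entire, at least one `R_j` is nonconstant, and
`(x₁,…,x_d) ↦ H(R₁(x₁)+⋯+R_d(x_d))` is a polynomial, then `H` is a polynomial. -/
theorem stmt_17 (d : ℕ) (H : ℂ → ℂ) (hH : Differentiable ℂ H)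
    (R : Fin d → Polynomial ℂ) (j₀ : Fin d) (hR : 0 < (R j₀).natDegree)
    (f : MvPolynomial (Fin d) ℂ)
    (hf : ∀ x : Fin d → ℂ,
      MvPolynomial.eval x f = H (∑ j, (R j).eval (x j))) :
    ∃ h : Polynomial ℂ, ∀ z : ℂ, H z = h.eval z := by
  classical
  set c : ℂ := ∑ j, if j = j₀ then 0 else (R j).eval 0 with hc
  set Q : Polynomial ℂ := R j₀ + Polynomial.C c with hQ
  have hQdeg : 0 < Q.natDegree := by rwa [hQ, Polynomial.natDegree_add_C]
  set P : Polynomial ℂ :=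
    MvPolynomial.aeval (fun j => if j = j₀ then (Polynomial.X : Polynomial ℂ) else 0) f with hP
  have hPt : ∀ t : ℂ, P.eval t = H (Q.eval t) := by
    intro t
    have h1 : P.eval t = MvPolynomial.eval (fun j => if j = j₀ then t else 0) f := by
      rw [hP]; exact restrictEval d f j₀ t
    rw [h1, hf]
    congr 1
    rw [hQ, Polynomial.eval_add, Polynomial.eval_C]
    calc ∑ j, (R j).eval (if j = j₀ then t else 0)
        = ∑ j, ((if j = j₀ then (R j₀).eval t else 0) + (if j = j₀ then 0 else (R j).eval 0)) := by
          apply Finset.sum_congr rfl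
          intro j _
          by_cases h : j = j₀ <;> simp [h]
      _ = (R j₀).eval t + c := by
          rw [Finset.sum_add_distrib, Finset.sum_ite_eq' Finset.univ j₀ fun _ => (R j₀).eval t]
          simp [hc]
  obtain ⟨B, hB1, hB⟩ := rootBound Q hQdeg
  set SP : ℝ := ∑ i ∈ Finset.range (P.natDegree + 1), ‖P.coeff i‖ with hSP
  have hSPnn : 0 ≤ SP := Finset.sum_nonneg fun i _ => norm_nonneg _
  apply growthPoly P.natDegree H hH
  refine ⟨SP * B ^ P.natDegree, fun z hz => ?_⟩
  obtain ⟨t, htz, htB⟩ := hB z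
  have hMz : max 1 ‖z‖ = ‖z‖ := max_eq_right hz
  rw [hMz] at htB
  have h1 : H z = P.eval t := by rw [hPt t, htz]
  rw [h1]
  calc ‖P.eval t‖ ≤ SP * max 1 ‖t‖ ^ P.natDegree := evalBound P P.natDegree le_rfl t
    _ ≤ SP * (B * ‖z‖) ^ P.natDegree := by
        apply mul_le_mul_of_nonneg_left _ hSPnn
        apply pow_le_pow_left₀ (le_trans zero_le_one (le_max_left _ _)) htB
    _ = SP * B ^ P.natDegree * ‖z‖ ^ P.natDegree := by rw [mul_pow]; ring
end

section
/- Let U₁, U₂ ⊆ ℂ be open, f̃ : U₁ → ℂ and Q̃ : U₂ → ℂ holomorphic, and r a function meromorphic on ℂ. Suppose f̃(γ(1)) = Q̃(∫_γ r) for every smooth curve γ : [0,1] → ℂ avoiding the poles of r with γ(1) ∈ U₁ and ∫_γ r ∈ U₂. Then for every such γ, f̃'(γ(1)) = Q̃'(∫_γ r) · r(γ(1)). -/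
open Set intervalIntegral
open scoped Topology

noncomputable section ChainAux


/-- The derivative of `Real.smoothTransition` vanishes for nonpositive arguments. -/
lemma aux_deriv_st_nonpos {x : ℝ} (hx : x ≤ 0) :
    deriv Real.smoothTransition x = 0 := by
  have hd : HasDerivAt Real.smoothTransition (deriv Real.smoothTransition x) x :=
    ((Real.smoothTransition.contDiff (n := 1)).differentiable one_ne_zero x).hasDerivAt
  have h2 : HasDerivWithinAt Real.smoothTransition 0 (Iic 0) x :=
    (hasDerivWithinAt_const x _ (0:ℝ)).congr
      (fun y hy => Real.smoothTransition.zero_of_nonpos hy)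
      (Real.smoothTransition.zero_of_nonpos hx)
  have hu : UniqueDiffWithinAt ℝ (Iic (0:ℝ)) x := uniqueDiffOn_Iic 0 x hx
  rw [← hd.hasDerivWithinAt.derivWithin hu]
  exact h2.derivWithin hu

/-- The derivative of `Real.smoothTransition` vanishes for arguments `≥ 1`. -/
lemma aux_deriv_st_one_le {x : ℝ} (hx : 1 ≤ x) :
    deriv Real.smoothTransition x = 0 := by
  have hd : HasDerivAt Real.smoothTransition (deriv Real.smoothTransition x) x :=
    ((Real.smoothTransition.contDiff (n := 1)).differentiable one_ne_zero x).hasDerivAt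
  have h2 : HasDerivWithinAt Real.smoothTransition 0 (Ici 1) x :=
    (hasDerivWithinAt_const x _ (1:ℝ)).congr
      (fun y hy => Real.smoothTransition.one_of_one_le hy)
      (Real.smoothTransition.one_of_one_le hx)
  have hu : UniqueDiffWithinAt ℝ (Ici (1:ℝ)) x := uniqueDiffOn_Ici 1 x hx
  rw [← hd.hasDerivWithinAt.derivWithin hu]
  exact h2.derivWithin hu

def auxPhi (t : ℝ) : ℝ := Real.smoothTransition (2*t)
def auxPsi (t : ℝ) : ℝ := Real.smoothTransition (2*t - 1)

lemma auxPhi_hasDerivAt (t : ℝ) :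
    HasDerivAt auxPhi (2 * deriv Real.smoothTransition (2*t)) t := by
  have h1 : HasDerivAt (fun t : ℝ => 2*t) 2 t := by
    simpa using (hasDerivAt_id t).const_mul (2:ℝ)
  have h2 : HasDerivAt Real.smoothTransition (deriv Real.smoothTransition (2*t)) (2*t) :=
    ((Real.smoothTransition.contDiff (n := 1)).differentiable one_ne_zero _).hasDerivAt
  rw [mul_comm]
  exact h2.comp t h1

lemma auxPsi_hasDerivAt (t : ℝ) :
    HasDerivAt auxPsi (2 * deriv Real.smoothTransition (2*t - 1)) t := by
  have h1 : HasDerivAt (fun t : ℝ => 2*t - 1) 2 t := by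
    simpa using ((hasDerivAt_id t).const_mul (2:ℝ)).sub_const 1
  have h2 : HasDerivAt Real.smoothTransition (deriv Real.smoothTransition (2*t - 1)) (2*t-1) :=
    ((Real.smoothTransition.contDiff (n := 1)).differentiable one_ne_zero _).hasDerivAt
  rw [mul_comm]
  exact h2.comp t h1

lemma auxPhi_contDiff : ContDiff ℝ 1 auxPhi :=
  Real.smoothTransition.contDiff.comp (contDiff_const.mul contDiff_id)

lemma auxPsi_contDiff : ContDiff ℝ 1 auxPsi :=
  Real.smoothTransition.contDiff.comp ((contDiff_const.mul contDiff_id).sub contDiff_const)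

lemma auxPhi_mem (t : ℝ) : auxPhi t ∈ Icc (0:ℝ) 1 :=
  ⟨Real.smoothTransition.nonneg _, Real.smoothTransition.le_one _⟩
lemma auxPsi_mem (t : ℝ) : auxPsi t ∈ Icc (0:ℝ) 1 :=
  ⟨Real.smoothTransition.nonneg _, Real.smoothTransition.le_one _⟩

lemma auxPhi_of_half_le {t : ℝ} (ht : 1/2 ≤ t) : auxPhi t = 1 :=
  Real.smoothTransition.one_of_one_le (by linarith)

lemma auxPsi_of_le_half {t : ℝ} (ht : t ≤ 1/2) : auxPsi t = 0 :=
  Real.smoothTransition.zero_of_nonpos (by linarith)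

lemma auxPhi_zero : auxPhi 0 = 0 :=
  Real.smoothTransition.zero_of_nonpos (by norm_num)
lemma auxPhi_half : auxPhi (1/2) = 1 := auxPhi_of_half_le le_rfl
lemma auxPsi_half : auxPsi (1/2) = 0 := auxPsi_of_le_half le_rfl
lemma auxPsi_one : auxPsi 1 = 1 := by
  simpa [auxPsi] using Real.smoothTransition.one_of_one_le (by norm_num : (1:ℝ) ≤ 2*1 - 1)

/-- The extended curve: follow `γ` (reparametrized) on `[0,1/2]`, then the segment
from `γ 1` to `γ 1 + c` on `[1/2,1]`. -/
def auxCurve (γ : ℝ → ℂ) (c : ℂ) (t : ℝ) : ℂ := γ (auxPhi t) + (auxPsi t : ℂ) * c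

lemma auxCurve_hasDerivAt {γ : ℝ → ℂ} (hγ : Differentiable ℝ γ) (c : ℂ) (t : ℝ) :
    HasDerivAt (auxCurve γ c)
      ((2 * deriv Real.smoothTransition (2*t)) • deriv γ (auxPhi t)
        + ((2 * deriv Real.smoothTransition (2*t - 1) : ℝ) : ℂ) * c) t := by
  have h1 : HasDerivAt (fun t => γ (auxPhi t))
      ((2 * deriv Real.smoothTransition (2*t)) • deriv γ (auxPhi t)) t := by
    simpa [Function.comp_def] using
      HasDerivAt.scomp t (hγ (auxPhi t)).hasDerivAt (auxPhi_hasDerivAt t)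
  have h2 : HasDerivAt (fun t => ((auxPsi t : ℝ) : ℂ) * c)
      (((2 * deriv Real.smoothTransition (2*t - 1) : ℝ) : ℂ) * c) t :=
    ((auxPsi_hasDerivAt t).ofReal_comp).mul_const c
  exact h1.add h2

lemma auxCurve_contDiff {γ : ℝ → ℂ} (hγ : ContDiff ℝ 1 γ) (c : ℂ) :
    ContDiff ℝ 1 (auxCurve γ c) := by
  refine (hγ.comp auxPhi_contDiff).add ?_
  exact (Complex.ofRealCLM.contDiff.comp auxPsi_contDiff).mul contDiff_const

lemma aux_seg_mem_ball {z₀ z : ℂ} {ε : ℝ} (hz : z ∈ Metric.ball z₀ ε) {u : ℝ}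
    (h0 : 0 ≤ u) (h1 : u ≤ 1) : z₀ + (u:ℂ) * (z - z₀) ∈ Metric.ball z₀ ε := by
  rw [Metric.mem_ball, dist_eq_norm] at *
  have he : z₀ + (u:ℂ)*(z-z₀) - z₀ = (u:ℂ)*(z-z₀) := by ring
  rw [he, norm_mul, Complex.norm_real]
  have : ‖u‖ ≤ 1 := by rw [Real.norm_eq_abs, abs_of_nonneg h0]; exact h1
  nlinarith [norm_nonneg (z - z₀)]


open MeasureTheory in
lemma auxCurve_integral {γ : ℝ → ℂ} (hγ : ContDiff ℝ 1 γ) {r : ℂ → ℂ} {S : Set ℂ}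
    (hr : DifferentiableOn ℂ r Sᶜ) (hSo : IsOpen Sᶜ)
    (hγS : ∀ t ∈ Icc (0:ℝ) 1, γ t ∉ S) {ε : ℝ}
    (hball : Metric.ball (γ 1) ε ⊆ Sᶜ) {z : ℂ} (hz : z ∈ Metric.ball (γ 1) ε) :
    (∫ t in (0:ℝ)..1, r (auxCurve γ (z - γ 1) t) * deriv (auxCurve γ (z - γ 1)) t)
      = (∫ t in (0:ℝ)..1, r (γ t) * deriv γ t)
        + ∫ u in (0:ℝ)..1, r (γ 1 + (u:ℂ) * (z - γ 1)) * (z - γ 1) := by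
  have hγd : Differentiable ℝ γ := hγ.differentiable one_ne_zero
  set c := z - γ 1 with hc
  set Γ := auxCurve γ c with hΓdef
  have hrc : ContinuousOn r Sᶜ := hr.continuousOn
  have hDer : ∀ t, deriv Γ t
      = (2 * deriv Real.smoothTransition (2*t)) • deriv γ (auxPhi t)
        + ((2 * deriv Real.smoothTransition (2*t - 1) : ℝ) : ℂ) * c :=
    fun t => (auxCurve_hasDerivAt hγd c t).deriv
  have hΓS : ∀ t ∈ Icc (0:ℝ) 1, Γ t ∈ Sᶜ := by
    intro t _
    rcases le_total t (1/2) with hle | hle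
    · have h3 : Γ t = γ (auxPhi t) := by
        simp [hΓdef, auxCurve, auxPsi_of_le_half hle]
      rw [h3]; exact hγS _ (auxPhi_mem t)
    · have h3 : Γ t = γ 1 + (auxPsi t : ℂ) * c := by
        rw [hΓdef]; unfold auxCurve; rw [auxPhi_of_half_le hle]
      rw [h3]
      exact hball (aux_seg_mem_ball hz (auxPsi_mem t).1 (auxPsi_mem t).2)
  have hContΓ : Continuous Γ := (auxCurve_contDiff hγ c).continuous
  have hContDΓ : Continuous (deriv Γ) := (auxCurve_contDiff hγ c).continuous_deriv le_rfl
  have hContAll : ContinuousOn (fun t => r (Γ t) * deriv Γ t) (Icc (0:ℝ) 1) :=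
    (hrc.comp hContΓ.continuousOn hΓS).mul hContDΓ.continuousOn
  have hI1 : IntervalIntegrable (fun t => r (Γ t) * deriv Γ t) volume 0 (1/2) := by
    apply ContinuousOn.intervalIntegrable
    exact hContAll.mono (by
      rw [uIcc_of_le (by norm_num : (0:ℝ) ≤ 1/2)]
      exact Icc_subset_Icc le_rfl (by norm_num))
  have hI2 : IntervalIntegrable (fun t => r (Γ t) * deriv Γ t) volume (1/2) 1 := by
    apply ContinuousOn.intervalIntegrable
    exact hContAll.mono (by
      rw [uIcc_of_le (by norm_num : (1:ℝ)/2 ≤ 1)]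
      exact Icc_subset_Icc (by norm_num) le_rfl)
  have hstd : Continuous (deriv Real.smoothTransition) :=
    (Real.smoothTransition.contDiff (n := 1)).continuous_deriv le_rfl
  -- first piece
  have hA : (∫ t in (0:ℝ)..(1/2), r (Γ t) * deriv Γ t)
      = ∫ u in (0:ℝ)..1, r (γ u) * deriv γ u := by
    have heq : EqOn (fun t => r (Γ t) * deriv Γ t)
        (fun t => (2 * deriv Real.smoothTransition (2*t)) •
          ((fun u => r (γ u) * deriv γ u) ∘ auxPhi) t) (uIcc (0:ℝ) (1/2)) := by
      intro t ht
      rw [uIcc_of_le (by norm_num : (0:ℝ) ≤ 1/2)] at ht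
      have h2 : deriv Real.smoothTransition (2*t - 1) = 0 :=
        aux_deriv_st_nonpos (by linarith [ht.2])
      have h3 : Γ t = γ (auxPhi t) := by
        simp [hΓdef, auxCurve, auxPsi_of_le_half ht.2]
      show r (Γ t) * deriv Γ t = _
      rw [hDer t, h2, h3]
      simp only [Function.comp_apply, Complex.real_smul]
      push_cast
      ring
    have hcv := integral_comp_smul_deriv'' (a := (0:ℝ)) (b := 1/2) (f := auxPhi)
      (f' := fun t => 2 * deriv Real.smoothTransition (2*t))
      (g := fun u => r (γ u) * deriv γ u)
      (auxPhi_contDiff.continuous.continuousOn)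
      (fun x _ => (auxPhi_hasDerivAt x).hasDerivWithinAt)
      ((continuous_const.mul (hstd.comp (continuous_const.mul continuous_id))).continuousOn)
      (by
        apply ContinuousOn.mono (s := Icc (0:ℝ) 1)
        · exact (hrc.comp hγd.continuous.continuousOn fun u hu => hγS u hu).mul
            (hγ.continuous_deriv le_rfl).continuousOn
        · rintro x ⟨u, -, rfl⟩
          exact auxPhi_mem u)
    rw [auxPhi_zero, auxPhi_half] at hcv
    exact (integral_congr heq).trans hcv
  -- second piece
  have hB : (∫ t in (1/2:ℝ)..1, r (Γ t) * deriv Γ t)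
      = ∫ u in (0:ℝ)..1, r (γ 1 + (u:ℂ) * c) * c := by
    have heq : EqOn (fun t => r (Γ t) * deriv Γ t)
        (fun t => (2 * deriv Real.smoothTransition (2*t - 1)) •
          ((fun u : ℝ => r (γ 1 + (u:ℂ) * c) * c) ∘ auxPsi) t) (uIcc (1/2:ℝ) 1) := by
      intro t ht
      rw [uIcc_of_le (by norm_num : (1:ℝ)/2 ≤ 1)] at ht
      have h2 : deriv Real.smoothTransition (2*t) = 0 :=
        aux_deriv_st_one_le (by linarith [ht.1])
      have h3 : Γ t = γ 1 + (auxPsi t : ℂ) * c := by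
        rw [hΓdef]; unfold auxCurve; rw [auxPhi_of_half_le ht.1]
      show r (Γ t) * deriv Γ t = _
      rw [hDer t, h2, h3]
      simp only [Function.comp_apply, Complex.real_smul]
      push_cast
      ring
    have hcv := integral_comp_smul_deriv'' (a := (1/2:ℝ)) (b := 1) (f := auxPsi)
      (f' := fun t => 2 * deriv Real.smoothTransition (2*t - 1))
      (g := fun u : ℝ => r (γ 1 + (u:ℂ) * c) * c)
      (auxPsi_contDiff.continuous.continuousOn)
      (fun x _ => (auxPsi_hasDerivAt x).hasDerivWithinAt)
      ((continuous_const.mul (hstd.comp (by fun_prop))).continuousOn)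
      (by
        apply ContinuousOn.mono (s := Icc (0:ℝ) 1)
        · apply ContinuousOn.mul _ continuousOn_const
          apply hrc.comp (by fun_prop : Continuous fun u : ℝ => γ 1 + (u:ℂ) * c).continuousOn
          intro u hu
          exact hball (aux_seg_mem_ball hz hu.1 hu.2)
        · rintro x ⟨u, -, rfl⟩
          exact auxPsi_mem u)
    rw [auxPsi_half, auxPsi_one] at hcv
    exact (integral_congr heq).trans hcv
  rw [← integral_add_adjacent_intervals hI1 hI2, hA, hB]

end ChainAux

/-- Chain rule along curves: if `f̃(γ(1)) = Q̃(∫_γ r)` for every smooth curve `γ`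
starting anywhere, avoiding the poles `S` of the meromorphic function `r`, with
`γ(1) ∈ U₁` and `∫_γ r ∈ U₂`, then `f̃'(γ(1)) = Q̃'(∫_γ r)·r(γ(1))` for every such
curve. -/
theorem stmt_19 (U₁ U₂ : Set ℂ) (hU₁ : IsOpen U₁) (hU₂ : IsOpen U₂)
    (ftilde Qtilde : ℂ → ℂ)
    (hft : DifferentiableOn ℂ ftilde U₁) (hQt : DifferentiableOn ℂ Qtilde U₂)
    (r : ℂ → ℂ) (S : Set ℂ) (hS : IsClosed S) (hr : DifferentiableOn ℂ r Sᶜ)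
    (h : ∀ γ : ℝ → ℂ, ContDiff ℝ 1 γ → (∀ t ∈ Set.Icc (0:ℝ) 1, γ t ∉ S) →
      γ 1 ∈ U₁ → (∫ t in (0:ℝ)..1, r (γ t) * deriv γ t) ∈ U₂ →
      ftilde (γ 1) = Qtilde (∫ t in (0:ℝ)..1, r (γ t) * deriv γ t)) :
    ∀ γ : ℝ → ℂ, ContDiff ℝ 1 γ → (∀ t ∈ Set.Icc (0:ℝ) 1, γ t ∉ S) →
      γ 1 ∈ U₁ → (∫ t in (0:ℝ)..1, r (γ t) * deriv γ t) ∈ U₂ →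
      deriv ftilde (γ 1) =
        deriv Qtilde (∫ t in (0:ℝ)..1, r (γ t) * deriv γ t) * r (γ 1) := by
  intro γ hγ hγS hγ1 hint
  have hrc : ContinuousOn r Sᶜ := hr.continuousOn
  have hz₀S : γ 1 ∈ Sᶜ := hγS 1 (by norm_num : (1:ℝ) ∈ Set.Icc (0:ℝ) 1)
  obtain ⟨ε, hε0, hball⟩ := Metric.isOpen_iff.mp hS.isOpen_compl _ hz₀S
  set z₀ := γ 1 with hz₀def
  set w₀ : ℂ := ∫ t in (0:ℝ)..1, r (γ t) * deriv γ t with hw₀def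
  set g : ℂ → ℂ :=
    fun z => w₀ + ∫ u in (0:ℝ)..1, r (z₀ + (u:ℂ) * (z - z₀)) * (z - z₀) with hgdef
  have hgz₀ : g z₀ = w₀ := by simp [hgdef]
  have hg' : HasDerivAt g (r z₀) z₀ := by
    rw [hasDerivAt_iff_isLittleO, Asymptotics.isLittleO_iff]
    intro C hC
    have hcont : ContinuousAt r z₀ := hrc.continuousAt (hS.isOpen_compl.mem_nhds hz₀S)
    obtain ⟨δ, hδ0, hδ⟩ := Metric.continuousAt_iff.mp hcont C hC
    filter_upwards [Metric.ball_mem_nhds z₀ (lt_min hδ0 hε0)] with z hz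
    have hzδ : dist z z₀ < δ := lt_of_lt_of_le (Metric.mem_ball.mp hz) (min_le_left _ _)
    have hzε : z ∈ Metric.ball z₀ ε :=
      Metric.mem_ball.mpr (lt_of_lt_of_le (Metric.mem_ball.mp hz) (min_le_right _ _))
    have hIseg : IntervalIntegrable
        (fun u : ℝ => r (z₀ + (u:ℂ) * (z - z₀)) * (z - z₀)) MeasureTheory.volume 0 1 := by
      apply ContinuousOn.intervalIntegrable
      rw [uIcc_of_le (by norm_num : (0:ℝ) ≤ 1)]
      apply ContinuousOn.mul _ continuousOn_const
      apply hrc.comp (by fun_prop : Continuous fun u : ℝ => z₀ + (u:ℂ) * (z - z₀)).continuousOn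
      intro u hu
      exact hball (aux_seg_mem_ball hzε hu.1 hu.2)
    have hrepr : g z - g z₀ - (z - z₀) • r z₀
        = ∫ u in (0:ℝ)..1, (r (z₀ + (u:ℂ) * (z - z₀)) - r z₀) * (z - z₀) := by
      rw [hgz₀]
      have hsub : (∫ u in (0:ℝ)..1, (r (z₀ + (u:ℂ) * (z - z₀)) - r z₀) * (z - z₀))
          = (∫ u in (0:ℝ)..1, r (z₀ + (u:ℂ) * (z - z₀)) * (z - z₀))
            - ∫ _u in (0:ℝ)..1, r z₀ * (z - z₀) := by
        rw [← intervalIntegral.integral_sub hIseg intervalIntegrable_const]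
        congr 1
        funext u
        ring
      rw [hsub, intervalIntegral.integral_const]
      simp only [hgdef]
      generalize (∫ u in (0:ℝ)..1, r (z₀ + (u:ℂ) * (z - z₀)) * (z - z₀)) = I
      simp only [smul_eq_mul, sub_zero, one_smul]
      ring
    rw [hrepr]
    have hb : ∀ u ∈ Set.uIoc (0:ℝ) 1,
        ‖(r (z₀ + (u:ℂ) * (z - z₀)) - r z₀) * (z - z₀)‖ ≤ C * ‖z - z₀‖ := by
      intro u hu
      rw [uIoc_of_le (by norm_num : (0:ℝ) ≤ 1)] at hu
      rw [norm_mul]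
      have hmem : dist (z₀ + (u:ℂ) * (z - z₀)) z₀ < δ := by
        rw [dist_eq_norm]
        have he : z₀ + (u:ℂ) * (z - z₀) - z₀ = (u:ℂ) * (z - z₀) := by ring
        rw [he, norm_mul, Complex.norm_real]
        calc ‖u‖ * ‖z - z₀‖ ≤ 1 * ‖z - z₀‖ := by
              gcongr
              rw [Real.norm_eq_abs, abs_of_pos hu.1]
              exact hu.2
          _ < δ := by rw [one_mul, ← dist_eq_norm]; exact hzδ
      have hle : ‖r (z₀ + (u:ℂ) * (z - z₀)) - r z₀‖ ≤ C := by
        have := le_of_lt (hδ hmem)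
        rwa [dist_eq_norm] at this
      exact mul_le_mul_of_nonneg_right hle (norm_nonneg _)
    calc ‖∫ u in (0:ℝ)..1, (r (z₀ + (u:ℂ) * (z - z₀)) - r z₀) * (z - z₀)‖
        ≤ (C * ‖z - z₀‖) * |1 - 0| := intervalIntegral.norm_integral_le_of_norm_le_const hb
      _ = C * ‖z - z₀‖ := by norm_num
  have hw₀U : w₀ ∈ U₂ := hint
  have hU₂nhds : {z : ℂ | g z ∈ U₂} ∈ nhds z₀ :=
    hg'.continuousAt.preimage_mem_nhds (by rw [hgz₀]; exact hU₂.mem_nhds hw₀U)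
  have hkey : ftilde =ᶠ[nhds z₀] fun z => Qtilde (g z) := by
    filter_upwards [hU₁.mem_nhds hγ1, Metric.ball_mem_nhds z₀ hε0, hU₂nhds]
      with z hzU₁ hzε hzU₂
    have hΓint : (∫ t in (0:ℝ)..1, r (auxCurve γ (z - z₀) t)
        * deriv (auxCurve γ (z - z₀)) t) = g z := by
      rw [auxCurve_integral hγ hr hS.isOpen_compl hγS hball hzε, hgdef]
    have e1 : auxPhi 1 = 1 := auxPhi_of_half_le (by norm_num)
    have hΓ1 : auxCurve γ (z - z₀) 1 = z := by
      unfold auxCurve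
      rw [e1, auxPsi_one, ← hz₀def]
      push_cast
      ring
    have hΓS' : ∀ t ∈ Set.Icc (0:ℝ) 1, auxCurve γ (z - z₀) t ∉ S := by
      intro t _
      rcases le_total t (1/2) with hle | hle
      · have h3 : auxCurve γ (z - z₀) t = γ (auxPhi t) := by
          simp [auxCurve, auxPsi_of_le_half hle]
        rw [h3]; exact hγS _ (auxPhi_mem t)
      · have h3 : auxCurve γ (z - z₀) t = z₀ + (auxPsi t : ℂ) * (z - z₀) := by
          unfold auxCurve; rw [auxPhi_of_half_le hle, ← hz₀def]
        rw [h3]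
        exact hball (aux_seg_mem_ball hzε (auxPsi_mem t).1 (auxPsi_mem t).2)
    have hmain := h (auxCurve γ (z - z₀)) (auxCurve_contDiff hγ (z - z₀)) hΓS'
      (by rw [hΓ1]; exact hzU₁) (by rw [hΓint]; exact hzU₂)
    rw [hΓ1, hΓint] at hmain
    exact hmain
  have hQ' : HasDerivAt Qtilde (deriv Qtilde w₀) (g z₀) := by
    rw [hgz₀]
    exact (hQt.differentiableAt (hU₂.mem_nhds hw₀U)).hasDerivAt
  have hcomp : HasDerivAt (fun z => Qtilde (g z)) (deriv Qtilde w₀ * r z₀) z₀ := by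
    simpa [Function.comp_def] using hQ'.comp z₀ hg'
  rw [hkey.deriv_eq, hcomp.deriv]
end
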